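/- arXiv:0707.3272 — 10 statements merged into one kernel-verified Lean document; each statement's English description precedes it below -/
import Mathlib

section
/- Every Parseval operator-valued frame {A_j} on H with range in H_o arises, up to unitary identification, as a compression of the orthonormal frame: identifying H with P_A(ℓ²(J)⊗H_o) via the isometry θ_A, one has A_j = L_j* P_A|_{P_A(ℓ²(J)⊗H_o)} for all j. -/
open ContinuousLinearMap

/-- Every Parseval operator-valued frame `{A_j}` arises, up to the unitary
identification of `H` with `P_A(ℓ²(J)⊗H₀)` given by the isometry `θ_A`, as the
compression of the orthonormal frame `{L_j*}` by the frame projection `P_A = θ_A θ_A*`: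
`θ_A` is an isometry with range equal to the range of `P_A`, and
`A_j = L_j* ∘ P_A ∘ θ_A` for all `j`. -/
theorem stmt4
    {H H₀ K : Type*}
    [NormedAddCommGroup H] [InnerProductSpace ℂ H] [CompleteSpace H]
    [NormedAddCommGroup H₀] [InnerProductSpace ℂ H₀] [CompleteSpace H₀]
    [NormedAddCommGroup K] [InnerProductSpace ℂ K] [CompleteSpace K]
    {J : Type*}
    (L : J → (H₀ →L[ℂ] K))
    (hL1 : ∀ j, (adjoint (L j)) ∘L (L j) = (1 : H₀ →L[ℂ] H₀))
    (hL0 : ∀ i j, i ≠ j → (adjoint (L i)) ∘L (L j) = 0)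
    (hLsum : ∀ x : K, HasSum (fun j => L j ((adjoint (L j)) x)) x)
    (A : J → (H →L[ℂ] H₀))
    (hParseval : ∀ x, HasSum (fun j => adjoint (A j) (A j x)) x)
    (θ : H →L[ℂ] K)
    (hθ : ∀ x, HasSum (fun j => L j (A j x)) (θ x)) :
    Isometry (⇑θ) ∧
      LinearMap.range ((θ ∘L adjoint θ : K →L[ℂ] K) : K →ₗ[ℂ] K) = LinearMap.range (θ : H →ₗ[ℂ] K) ∧
      ∀ j, A j = (adjoint (L j) ∘L (θ ∘L adjoint θ)) ∘L θ := by
  -- Step 1: L_j* θ = A j pointwise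
  have key : ∀ j x, adjoint (L j) (θ x) = A j x := by
    classical
    intro j x
    have h1 : HasSum (fun i => adjoint (L j) (L i (A i x))) (adjoint (L j) (θ x)) :=
      (adjoint (L j)).hasSum (hθ x)
    have h2 : (fun i => adjoint (L j) (L i (A i x))) =
        fun i => if i = j then A j x else 0 := by
      funext i
      by_cases hij : i = j
      · subst hij
        simp only [if_pos rfl]
        have := congrArg (fun T => T (A i x)) (hL1 i)
        simpa [ContinuousLinearMap.comp_apply] using this
      · simp only [if_neg hij]
        have := congrArg (fun T => T (A i x)) (hL0 j i (Ne.symm hij))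
        simpa [ContinuousLinearMap.comp_apply] using this
    rw [h2] at h1
    exact h1.unique (hasSum_ite_eq j (A j x))
  -- Step 2: inner products preserved
  have hinner : ∀ x y : H, (inner ℂ (θ x) (θ y) : ℂ) = inner ℂ x y := by
    intro x y
    have h1 : HasSum (fun j => (inner ℂ (θ x) (L j (A j y)) : ℂ)) (inner ℂ (θ x) (θ y)) :=
      (innerSL ℂ (θ x)).hasSum (hθ y)
    have h2 : (fun j => (inner ℂ (θ x) (L j (A j y)) : ℂ)) =
        fun j => (inner ℂ x (adjoint (A j) (A j y)) : ℂ) := by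
      funext j
      rw [← adjoint_inner_left (L j), key j x, ← adjoint_inner_right (A j)]
    rw [h2] at h1
    have h3 : HasSum (fun j => (inner ℂ x (adjoint (A j) (A j y)) : ℂ)) (inner ℂ x y) :=
      (innerSL ℂ x).hasSum (hParseval y)
    exact h1.unique h3
  have hadj : adjoint θ ∘L θ = (1 : H →L[ℂ] H) := by
    ext x
    refine ext_inner_right ℂ fun y => ?_
    simp [adjoint_inner_left, hinner]
  have hIso : Isometry (⇑θ) := by
    refine AddMonoidHomClass.isometry_of_norm θ fun x => ?_
    have : (inner ℂ (θ x) (θ x) : ℂ) = inner ℂ x x := hinner x x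
    rw [norm_eq_sqrt_re_inner (𝕜 := ℂ) (θ x), norm_eq_sqrt_re_inner (𝕜 := ℂ) x, this]
  refine ⟨hIso, ?_, ?_⟩
  · apply le_antisymm
    · rintro _ ⟨x, rfl⟩
      exact ⟨adjoint θ x, rfl⟩
    · rintro _ ⟨x, rfl⟩
      refine ⟨θ x, ?_⟩
      have : adjoint θ (θ x) = x := by
        have := congrArg (fun T => T x) hadj
        simpa using this
      simp [this]
  · intro j
    ext x
    have hx : adjoint θ (θ x) = x := by
      have := congrArg (fun T => T x) hadj
      simpa using this
    simp [hx, key j x]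
end

section
/- Let {A_j} be a Parseval operator-valued frame with analysis operator θ_A and frame projection P_A, and let V ∈ B(ℓ²(J)⊗H_o) be a partial isometry with V*V = P_A. Then {B_j := L_j* V θ_A}_{j∈J} is a Parseval operator-valued frame, θ_B = Vθ_A, and V = θ_B θ_A*. Conversely, every Parseval operator-valued frame {B_j} on H with range H_o arises this way with V := θ_Bθ_A*. -/
open ContinuousLinearMap

/-- Let `{A_j}` be a Parseval operator-valued frame with analysis operator
`θ_A` and frame projection `P_A = θ_A θ_A*`.
(1) For every partial isometry `V` with `V*V = P_A`, the family `B_j := L_j* V θ_A` is a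
Parseval operator-valued frame with analysis operator `V θ_A`, and `V = (Vθ_A) θ_A*`.
(2) Conversely, every Parseval operator-valued frame `{B_j}` on `H` with range `H₀`
arises this way with `V := θ_B θ_A*`. -/
theorem stmt5
    {H H₀ K : Type*}
    [NormedAddCommGroup H] [InnerProductSpace ℂ H] [CompleteSpace H]
    [NormedAddCommGroup H₀] [InnerProductSpace ℂ H₀] [CompleteSpace H₀]
    [NormedAddCommGroup K] [InnerProductSpace ℂ K] [CompleteSpace K]
    {J : Type*}
    (L : J → (H₀ →L[ℂ] K))
    (hL1 : ∀ j, (adjoint (L j)) ∘L (L j) = (1 : H₀ →L[ℂ] H₀))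
    (hL0 : ∀ i j, i ≠ j → (adjoint (L i)) ∘L (L j) = 0)
    (hLsum : ∀ x : K, HasSum (fun j => L j ((adjoint (L j)) x)) x)
    (A : J → (H →L[ℂ] H₀))
    (θA : H →L[ℂ] K)
    (hθA : ∀ x, HasSum (fun j => L j (A j x)) (θA x))
    (hPars : adjoint θA ∘L θA = 1) :
    (∀ V : K →L[ℂ] K, adjoint V ∘L V = θA ∘L adjoint θA →
      ((∀ x, HasSum (fun j => L j ((adjoint (L j) ∘L (V ∘L θA)) x)) ((V ∘L θA) x)) ∧
       (∀ x, HasSum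
          (fun j => adjoint (adjoint (L j) ∘L (V ∘L θA))
            ((adjoint (L j) ∘L (V ∘L θA)) x)) x) ∧
       V = (V ∘L θA) ∘L adjoint θA)) ∧
    (∀ (B : J → (H →L[ℂ] H₀)) (θB : H →L[ℂ] K),
      (∀ x, HasSum (fun j => L j (B j x)) (θB x)) →
      adjoint θB ∘L θB = 1 →
      (adjoint (θB ∘L adjoint θA) ∘L (θB ∘L adjoint θA) = θA ∘L adjoint θA ∧
       ∀ j, B j = adjoint (L j) ∘L ((θB ∘L adjoint θA) ∘L θA))) := by
  have hPx : ∀ x : H, adjoint θA (θA x) = x := fun x => by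
    have := DFunLike.congr_fun hPars x; simpa using this
  constructor
  · intro V hV
    have hVθ : ∀ y : K, adjoint V (V y) = θA (adjoint θA y) := fun y => by
      have := DFunLike.congr_fun hV y; simpa using this
    refine ⟨fun x => ?_, fun x => ?_, ?_⟩
    · simpa using hLsum (V (θA x))
    · have h2 := (adjoint θA ∘L adjoint V).hasSum (hLsum (V (θA x)))
      have h3 : (adjoint θA ∘L adjoint V) (V (θA x)) = x := by
        simp [hVθ, hPx]
      rw [h3] at h2
      simpa [adjoint_comp, adjoint_adjoint] using h2
    · ext x
      set y := x - θA (adjoint θA x) with hy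
      have hθAy : adjoint θA y = 0 := by
        simp [hy, map_sub, hPx]
      have hVy : V y = 0 := by
        have : (inner ℂ (V y) (V y) : ℂ) = 0 := by
          rw [← adjoint_inner_left, hVθ, hθAy]
          simp
        simpa [inner_self_eq_zero] using this
      have h4 : V x - V (θA (adjoint θA x)) = 0 := by
        rw [← map_sub, ← hy]; exact hVy
      have := sub_eq_zero.mp h4
      simpa using this
  · intro B θB hB hθB
    have hθBx : ∀ x : H, adjoint θB (θB x) = x := fun x => by
      have := DFunLike.congr_fun hθB x; simpa using this
    constructor
    · ext x
      simp [adjoint_comp, adjoint_adjoint, hθBx]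
    · intro j
      classical
      ext x
      have h1 := (adjoint (L j)).hasSum (hB x)
      have heq : (fun i => adjoint (L j) (L i (B i x)))
          = fun i => if i = j then B j x else 0 := by
        funext i
        by_cases h : i = j
        · subst h
          have := DFunLike.congr_fun (hL1 i) (B i x)
          simpa using this
        · have := DFunLike.congr_fun (hL0 j i (Ne.symm h)) (B i x)
          simpa [h] using this
      rw [heq] at h1
      have h2 : HasSum (fun i => if i = j then B j x else 0) (B j x) :=
        hasSum_ite_eq j (B j x)
      have h3 : adjoint (L j) (θB x) = B j x := h1.unique h2
      simp [hPx, h3]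
end

section
/- Let {A_j} be an operator-valued frame and M ∈ B(ℓ²(J)⊗H_o) with M = MP_A such that M*M restricted to P_A(ℓ²(J)⊗H_o) is bounded below (left-invertible). Then {B_j := L_j* M θ_A}_{j∈J} is an operator-valued frame with θ_B = M θ_A, and ‖(M*M)^{-1}‖^{-1} S_A ≤ S_B ≤ ‖M‖² S_A. -/
open ContinuousLinearMap

set_option maxHeartbeats 2000000

local notation "⟪" x ", " y "⟫" => @inner ℂ _ _ x y

/-- Let `{A_j}` be an operator-valued frame with analysis operator `θ_A`,
frame operator `S_A` (inverse `Sinv`) and frame projection `P = θ_A Sinv θ_A*`. Let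
`M` satisfy `M = M P` and suppose `M*M` is invertible on the range of `P`, with inverse
`N` (`N = P N P`). Then `{B_j := L_j* M θ_A}` is an operator-valued frame with analysis
operator `M θ_A` and with frame operator `S_B = (Mθ_A)*(Mθ_A)` satisfying
`‖N‖⁻¹ S_A ≤ S_B ≤ ‖M‖² S_A`. -/
theorem stmt6
    {H H₀ K : Type*}
    [NormedAddCommGroup H] [InnerProductSpace ℂ H] [CompleteSpace H]
    [NormedAddCommGroup H₀] [InnerProductSpace ℂ H₀] [CompleteSpace H₀]
    [NormedAddCommGroup K] [InnerProductSpace ℂ K] [CompleteSpace K]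
    {J : Type*}
    (L : J → (H₀ →L[ℂ] K))
    (hL1 : ∀ j, (adjoint (L j)) ∘L (L j) = (1 : H₀ →L[ℂ] H₀))
    (hL0 : ∀ i j, i ≠ j → (adjoint (L i)) ∘L (L j) = 0)
    (hLsum : ∀ x : K, HasSum (fun j => L j ((adjoint (L j)) x)) x)
    (A : J → (H →L[ℂ] H₀))
    (S : H →L[ℂ] H)
    (hS : ∀ x, HasSum (fun j => adjoint (A j) (A j x)) (S x))
    (hSpos : S.IsPositive)
    (Sinv : H →L[ℂ] H) (hSinv₁ : Sinv ∘L S = 1) (hSinv₂ : S ∘L Sinv = 1)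
    (θ : H →L[ℂ] K)
    (hθ : ∀ x, HasSum (fun j => L j (A j x)) (θ x))
    (M : K →L[ℂ] K)
    (hM : M ∘L ((θ ∘L Sinv) ∘L adjoint θ) = M)
    (N : K →L[ℂ] K)
    (hN : N ∘L ((θ ∘L Sinv) ∘L adjoint θ) = N)
    (hN' : ((θ ∘L Sinv) ∘L adjoint θ) ∘L N = N)
    (hNleft : (N ∘L (adjoint M ∘L M)) = (θ ∘L Sinv) ∘L adjoint θ)
    (hNright : ((adjoint M ∘L M) ∘L N) = (θ ∘L Sinv) ∘L adjoint θ) :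
    (∀ x, HasSum (fun j => L j ((adjoint (L j) ∘L (M ∘L θ)) x)) ((M ∘L θ) x)) ∧
    (∀ x, HasSum
        (fun j => adjoint (adjoint (L j) ∘L (M ∘L θ))
          ((adjoint (L j) ∘L (M ∘L θ)) x))
        ((adjoint (M ∘L θ) ∘L (M ∘L θ)) x)) ∧
    IsUnit (adjoint (M ∘L θ) ∘L (M ∘L θ)) ∧
    ((adjoint (M ∘L θ) ∘L (M ∘L θ)) - ((‖N‖⁻¹ : ℂ) • S)).IsPositive ∧
    ((((‖M‖ : ℂ)^2) • S) - (adjoint (M ∘L θ) ∘L (M ∘L θ))).IsPositive := by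
  -- `L j† ∘ θ = A j`
  have hLθ : ∀ j x, adjoint (L j) (θ x) = A j x := by
    intro j x
    have hfj : adjoint (L j) (L j (A j x)) = A j x := by
      have := DFunLike.congr_fun (hL1 j) (A j x); simpa using this
    have hsum : HasSum (fun i => adjoint (L j) (L i (A i x))) (A j x) := by
      rw [← hfj]
      refine hasSum_single j ?_
      intro i hi
      have := DFunLike.congr_fun (hL0 j i (Ne.symm hi)) (A i x); simpa using this
    exact ((hθ x).mapL (adjoint (L j))).unique hsum
  -- `θ*θ = S`
  have hθθ : adjoint θ ∘L θ = S := by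
    ext x
    refine ext_inner_left ℂ fun v => ?_
    have h1 : HasSum (fun j => ⟪θ v, L j (A j x)⟫) ⟪θ v, θ x⟫ :=
      (hθ x).mapL (innerSL ℂ (θ v))
    have h2 : HasSum (fun j => ⟪v, adjoint (A j) (A j x)⟫) ⟪v, S x⟫ :=
      (hS x).mapL (innerSL ℂ v)
    have hfe : (fun j => ⟪θ v, L j (A j x)⟫) = fun j => ⟪v, adjoint (A j) (A j x)⟫ := by
      funext j
      rw [adjoint_inner_right, ← hLθ j v, adjoint_inner_left]
    rw [hfe] at h1
    rw [comp_apply, adjoint_inner_right]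
    exact h1.unique h2
  -- pointwise versions of the hypotheses
  have hθθp : ∀ x, adjoint θ (θ x) = S x := fun x => by
    have := DFunLike.congr_fun hθθ x; simpa using this
  have hSSinv : ∀ x, S (Sinv x) = x := fun x => by
    have := DFunLike.congr_fun hSinv₂ x; simpa using this
  have hSinvS : ∀ x, Sinv (S x) = x := fun x => by
    have := DFunLike.congr_fun hSinv₁ x; simpa using this
  have hMp : ∀ y, M (θ (Sinv (adjoint θ y))) = M y := fun y => by
    have := DFunLike.congr_fun hM y; simpa using this
  have hNp : ∀ y, N (θ (Sinv (adjoint θ y))) = N y := fun y => by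
    have := DFunLike.congr_fun hN y; simpa using this
  have hNleftp : ∀ y, N (adjoint M (M y)) = θ (Sinv (adjoint θ y)) := fun y => by
    have := DFunLike.congr_fun hNleft y; simpa using this
  have hNrightp : ∀ y, adjoint M (M (N y)) = θ (Sinv (adjoint θ y)) := fun y => by
    have := DFunLike.congr_fun hNright y; simpa using this
  -- `P θ = θ` pointwise
  have hPθ : ∀ x, θ (Sinv (adjoint θ (θ x))) = θ x := fun x => by
    rw [hθθp, hSinvS]
  -- `Sinv` and the frame projection `P` are self-adjoint
  have hSadj : adjoint S = S := by
    rw [← star_eq_adjoint]; exact hSpos.isSelfAdjoint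
  have hSinvadj : adjoint Sinv = Sinv := by
    calc adjoint Sinv = (adjoint Sinv ∘L adjoint S) ∘L Sinv := by
          rw [hSadj, comp_assoc, hSinv₂, one_def, comp_id]
      _ = adjoint (S ∘L Sinv) ∘L Sinv := by rw [adjoint_comp]
      _ = Sinv := by rw [hSinv₂, one_def, adjoint_id, id_comp]
  have hPadj : adjoint ((θ ∘L Sinv) ∘L adjoint θ) = (θ ∘L Sinv) ∘L adjoint θ := by
    rw [adjoint_comp, adjoint_comp, adjoint_adjoint, hSinvadj, comp_assoc]
  -- `N` is self-adjoint
  have hNadj : adjoint N = N := by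
    have e1 : adjoint N ∘L ((θ ∘L Sinv) ∘L adjoint θ) = adjoint N := by
      have := congrArg adjoint hN'
      rwa [adjoint_comp, hPadj] at this
    have e2 : adjoint N ∘L (adjoint M ∘L M) = (θ ∘L Sinv) ∘L adjoint θ := by
      have := congrArg adjoint hNright
      rwa [adjoint_comp, adjoint_comp, adjoint_adjoint, hPadj] at this
    calc adjoint N = adjoint N ∘L ((adjoint M ∘L M) ∘L N) := by rw [hNright, e1]
      _ = (adjoint N ∘L (adjoint M ∘L M)) ∘L N := (comp_assoc _ _ _).symm
      _ = ((θ ∘L Sinv) ∘L adjoint θ) ∘L N := by rw [e2]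
      _ = N := hN'
  -- key lower-bound inequality
  have key : ∀ x : H, ‖N‖⁻¹ * ‖θ x‖ ^ 2 ≤ ‖M (θ x)‖ ^ 2 := by
    intro x
    set y := θ x with hy
    by_cases hy0 : y = 0
    · simp [hy0]
    have hyP : θ (Sinv (adjoint θ y)) = y := by rw [hy]; exact hPθ x
    have hNadjp : ∀ v w : K, ⟪v, N w⟫ = ⟪N v, w⟫ := by
      intro v w
      conv_lhs => rw [← hNadj]
      rw [adjoint_inner_right]
    have h1 : ‖y‖ ^ 2 ≤ ‖M (N y)‖ * ‖M y‖ := by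
      have e : ((‖y‖ : ℂ)) ^ 2 = ⟪M (N y), M y⟫ := by
        calc ((‖y‖ : ℂ)) ^ 2 = ⟪y, y⟫ := (inner_self_eq_norm_sq_to_K (𝕜 := ℂ) y).symm
          _ = ⟪y, N (adjoint M (M y))⟫ := by rw [hNleftp, hyP]
          _ = ⟪N y, adjoint M (M y)⟫ := hNadjp y _
          _ = ⟪M (N y), M y⟫ := adjoint_inner_right M _ _
      have e' : ‖y‖ ^ 2 = Complex.re ⟪M (N y), M y⟫ := by
        rw [← e, ← Complex.ofReal_pow, Complex.ofReal_re]
      rw [e']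
      calc Complex.re ⟪M (N y), M y⟫ ≤ ‖⟪M (N y), M y⟫‖ := Complex.re_le_norm _
        _ ≤ ‖M (N y)‖ * ‖M y‖ := norm_inner_le_norm _ _
    have h2 : ‖M (N y)‖ ^ 2 ≤ ‖N‖ * ‖y‖ ^ 2 := by
      have e : ((‖M (N y)‖ : ℂ)) ^ 2 = ⟪N y, y⟫ := by
        calc ((‖M (N y)‖ : ℂ)) ^ 2 = ⟪M (N y), M (N y)⟫ :=
              (inner_self_eq_norm_sq_to_K (𝕜 := ℂ) (M (N y))).symm
          _ = ⟪N y, adjoint M (M (N y))⟫ := (adjoint_inner_right M _ _).symm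
          _ = ⟪N y, y⟫ := by rw [hNrightp, hyP]
      have e' : ‖M (N y)‖ ^ 2 = Complex.re ⟪N y, y⟫ := by
        rw [← e, ← Complex.ofReal_pow, Complex.ofReal_re]
      rw [e']
      calc Complex.re ⟪N y, y⟫ ≤ ‖⟪N y, y⟫‖ := Complex.re_le_norm _
        _ ≤ ‖N y‖ * ‖y‖ := norm_inner_le_norm _ _
        _ ≤ (‖N‖ * ‖y‖) * ‖y‖ :=
            mul_le_mul_of_nonneg_right (N.le_opNorm y) (norm_nonneg y)
        _ = ‖N‖ * ‖y‖ ^ 2 := by ring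
    have hyn : 0 < ‖y‖ := norm_pos_iff.mpr hy0
    have hA : ‖y‖ ^ 2 * ‖y‖ ^ 2 ≤ (‖M (N y)‖ * ‖M y‖) * (‖M (N y)‖ * ‖M y‖) :=
      mul_le_mul h1 h1 (sq_nonneg _) (mul_nonneg (norm_nonneg _) (norm_nonneg _))
    have hC : ‖M (N y)‖ ^ 2 * ‖M y‖ ^ 2 ≤ (‖N‖ * ‖y‖ ^ 2) * ‖M y‖ ^ 2 :=
      mul_le_mul_of_nonneg_right h2 (sq_nonneg _)
    have h4 : ‖y‖ ^ 2 ≤ ‖N‖ * ‖M y‖ ^ 2 := by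
      have h5 : ‖y‖ ^ 2 * ‖y‖ ^ 2 ≤ (‖N‖ * ‖M y‖ ^ 2) * ‖y‖ ^ 2 := by nlinarith [hA, hC]
      exact le_of_mul_le_mul_right h5 (by positivity)
    have hNpos : 0 < ‖N‖ := by
      rcases (norm_nonneg N).lt_or_eq with h | h
      · exact h
      · exfalso; nlinarith [h4, hyn]
    rw [inv_mul_le_iff₀ hNpos]
    exact h4
  -- inner product formulas
  have hT : ∀ x : H, Complex.re ⟪(adjoint (M ∘L θ) ∘L (M ∘L θ)) x, x⟫ = ‖M (θ x)‖ ^ 2 := by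
    intro x
    rw [comp_apply, adjoint_inner_left, inner_self_eq_norm_sq_to_K (𝕜 := ℂ)]
    norm_cast
  have hTsa : IsSelfAdjoint (adjoint (M ∘L θ) ∘L (M ∘L θ)) := by
    rw [isSelfAdjoint_iff', adjoint_comp, adjoint_adjoint]
  have hSx : ∀ x : H, ⟪S x, x⟫ = ((‖θ x‖ ^ 2 : ℝ) : ℂ) := by
    intro x
    rw [← hθθ, comp_apply, adjoint_inner_left]
    have := inner_self_eq_norm_sq_to_K (𝕜 := ℂ) (θ x)
    rw [this]; norm_cast
  refine ⟨fun x => hLsum ((M ∘L θ) x), ?_, ?_, ?_, ?_⟩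
  · -- frame operator sum
    intro x
    have h := (hLsum ((M ∘L θ) x)).mapL (adjoint (M ∘L θ))
    simpa only [adjoint_comp, adjoint_adjoint, comp_apply] using h
  · -- invertibility
    refine isUnit_iff_exists.mpr ⟨(Sinv ∘L adjoint θ) ∘L (N ∘L (θ ∘L Sinv)), ?_, ?_⟩
    · ext x
      simp only [ContinuousLinearMap.mul_def, comp_apply, adjoint_comp, ContinuousLinearMap.one_apply]
      rw [hMp, hNrightp, hθθp, hSSinv, hθθp, hSSinv]
    · ext x
      simp only [ContinuousLinearMap.mul_def, comp_apply, adjoint_comp, ContinuousLinearMap.one_apply]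
      rw [hNp, hNleftp, hθθp, hSinvS, hθθp, hSinvS]
  · -- lower frame bound
    constructor
    · have h2 : IsSelfAdjoint ((‖N‖⁻¹ : ℂ) • S) := by
        rw [IsSelfAdjoint, star_smul, star_eq_adjoint, hSadj]
        congr 1
        simp [Complex.star_def, map_inv₀, Complex.conj_ofReal]
      exact ContinuousLinearMap.isSelfAdjoint_iff_isSymmetric.mp (hTsa.sub h2)
    · intro x
      rw [reApplyInnerSelf_apply, RCLike.re_to_complex, sub_apply, inner_sub_left,
        Complex.sub_re, hT, smul_apply, inner_smul_left, hSx]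
      have hre : ((starRingEnd ℂ) ((‖N‖ : ℂ)⁻¹) * ((‖θ x‖ ^ 2 : ℝ) : ℂ)).re
          = ‖N‖⁻¹ * ‖θ x‖ ^ 2 := by
        rw [map_inv₀, Complex.conj_ofReal, ← Complex.ofReal_inv, ← Complex.ofReal_mul,
          Complex.ofReal_re]
      rw [hre]
      have := key x
      linarith
  · -- upper frame bound
    constructor
    · have h2 : IsSelfAdjoint (((‖M‖ : ℂ) ^ 2) • S) := by
        rw [IsSelfAdjoint, star_smul, star_eq_adjoint, hSadj]
        congr 1
        simp [Complex.star_def, Complex.conj_ofReal]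
      exact ContinuousLinearMap.isSelfAdjoint_iff_isSymmetric.mp (h2.sub hTsa)
    · intro x
      rw [reApplyInnerSelf_apply, RCLike.re_to_complex, sub_apply, inner_sub_left,
        Complex.sub_re, smul_apply, inner_smul_left, hSx, hT]
      have hre : ((starRingEnd ℂ) ((‖M‖ : ℂ) ^ 2) * ((‖θ x‖ ^ 2 : ℝ) : ℂ)).re
          = ‖M‖ ^ 2 * ‖θ x‖ ^ 2 := by
        rw [← Complex.ofReal_pow, Complex.conj_ofReal, ← Complex.ofReal_mul,
          Complex.ofReal_re]
      rw [hre]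
      have h5 : ‖M (θ x)‖ ≤ ‖M‖ * ‖θ x‖ := M.le_opNorm (θ x)
      have h6 : ‖M (θ x)‖ ^ 2 ≤ (‖M‖ * ‖θ x‖) ^ 2 := by
        nlinarith [norm_nonneg (M (θ x)), norm_nonneg (θ x), norm_nonneg M]
      nlinarith [h6]
end

section
/- Two operator-valued frames {A_j} and {B_j} on the same Hilbert space H with range H_o are right-similar (B_j = A_jT for some invertible T ∈ B(H)) if and only if their frame projections coincide: P_B = P_A. In that case T is unique and equals S_A^{-1}θ_A*θ_B. -/
open ContinuousLinearMap

set_option maxHeartbeats 1000000 in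
/-- Two operator-valued frames `{A_j}` and `{B_j}` on the same Hilbert
space `H` with range `H₀` are right-similar (`B_j = A_j T` for some invertible `T`)
if and only if their frame projections coincide: `P_B = P_A`. In that case `T` is
unique and equals `S_A⁻¹ θ_A* θ_B`. -/
theorem stmt8
    {H H₀ K : Type*}
    [NormedAddCommGroup H] [InnerProductSpace ℂ H] [CompleteSpace H]
    [NormedAddCommGroup H₀] [InnerProductSpace ℂ H₀] [CompleteSpace H₀]
    [NormedAddCommGroup K] [InnerProductSpace ℂ K] [CompleteSpace K]
    {J : Type*}
    (L : J → (H₀ →L[ℂ] K))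
    (hL1 : ∀ j, (adjoint (L j)) ∘L (L j) = (1 : H₀ →L[ℂ] H₀))
    (hL0 : ∀ i j, i ≠ j → (adjoint (L i)) ∘L (L j) = 0)
    (hLsum : ∀ x : K, HasSum (fun j => L j ((adjoint (L j)) x)) x)
    (A B : J → (H →L[ℂ] H₀))
    (SA SB : H →L[ℂ] H)
    (hSA : ∀ x, HasSum (fun j => adjoint (A j) (A j x)) (SA x))
    (hSB : ∀ x, HasSum (fun j => adjoint (B j) (B j x)) (SB x))
    (hSApos : SA.IsPositive) (hSBpos : SB.IsPositive)
    (SAinv : H →L[ℂ] H) (hSAinv₁ : SAinv ∘L SA = 1) (hSAinv₂ : SA ∘L SAinv = 1)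
    (SBinv : H →L[ℂ] H) (hSBinv₁ : SBinv ∘L SB = 1) (hSBinv₂ : SB ∘L SBinv = 1)
    (θA θB : H →L[ℂ] K)
    (hθA : ∀ x, HasSum (fun j => L j (A j x)) (θA x))
    (hθB : ∀ x, HasSum (fun j => L j (B j x)) (θB x)) :
    ((∃ T : H →L[ℂ] H, IsUnit T ∧ ∀ j, B j = A j ∘L T) ↔
      (θB ∘L SBinv) ∘L adjoint θB = (θA ∘L SAinv) ∘L adjoint θA) ∧
    (∀ T : H →L[ℂ] H, IsUnit T → (∀ j, B j = A j ∘L T) →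
      T = SAinv ∘L (adjoint θA ∘L θB)) := by
  -- Pointwise recovery: adjoint (L j) ∘L θ = C j
  have key : ∀ (C : J → (H →L[ℂ] H₀)) (θ : H →L[ℂ] K),
      (∀ x, HasSum (fun j => L j (C j x)) (θ x)) →
      ∀ j, adjoint (L j) ∘L θ = C j := by
    intro C θ hθ j
    ext x
    have h1 := (hθ x).mapL (adjoint (L j))
    have h2 : HasSum (fun i => adjoint (L j) (L i (C i x))) (C j x) := by
      have hz : ∀ i, i ≠ j → adjoint (L j) (L i (C i x)) = 0 := by
        intro i hi
        have h0 := hL0 j i hi.symm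
        have := congrArg (fun (M : H₀ →L[ℂ] H₀) => M (C i x)) h0
        simpa using this
      have hs := hasSum_single (f := fun i => adjoint (L j) (L i (C i x))) j hz
      have hj : adjoint (L j) (L j (C j x)) = C j x := by
        have := congrArg (fun (M : H₀ →L[ℂ] H₀) => M (C j x)) (hL1 j)
        simpa using this
      simpa only [hj] using hs
    exact h1.unique h2
  have hAj := key A θA hθA
  have hBj := key B θB hθB
  have pAj : ∀ j x, A j x = adjoint (L j) (θA x) := by
    intro j x; rw [← hAj j]; rfl
  have pBj : ∀ j x, B j x = adjoint (L j) (θB x) := by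
    intro j x; rw [← hBj j]; rfl
  -- cross Gram: adjoint θC ∘L θD = S whenever S is the pointwise sum
  have key2 : ∀ (C D : J → (H →L[ℂ] H₀)) (θC θD : H →L[ℂ] K) (S : H →L[ℂ] H),
      (∀ j, adjoint (L j) ∘L θC = C j) →
      (∀ j, adjoint (L j) ∘L θD = D j) →
      (∀ x, HasSum (fun j => adjoint (C j) (D j x)) (S x)) →
      adjoint θC ∘L θD = S := by
    intro C D θC θD S hCj hDj hS
    ext x
    have h1 := (hLsum (θD x)).mapL (adjoint θC)
    have h2 : (fun j => adjoint θC (L j (adjoint (L j) (θD x)))) =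
        fun j => adjoint (C j) (D j x) := by
      funext j
      have hC' : adjoint (C j) = adjoint θC ∘L L j := by
        rw [← hCj j, adjoint_comp, adjoint_adjoint]
      have hD' : D j x = adjoint (L j) (θD x) := by rw [← hDj j]; rfl
      rw [hC', hD']; rfl
    rw [h2] at h1
    exact h1.unique (hS x)
  have hGA : adjoint θA ∘L θA = SA := key2 A A θA θA SA hAj hAj hSA
  have hGB : adjoint θB ∘L θB = SB := key2 B B θB θB SB hBj hBj hSB
  have pGA : ∀ x, adjoint θA (θA x) = SA x := fun x => by
    have := congrArg (fun (M : H →L[ℂ] H) => M x) hGA; simpa using this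
  have pGB : ∀ x, adjoint θB (θB x) = SB x := fun x => by
    have := congrArg (fun (M : H →L[ℂ] H) => M x) hGB; simpa using this
  have pSAinv₁ : ∀ x, SAinv (SA x) = x := fun x => by
    have := congrArg (fun (M : H →L[ℂ] H) => M x) hSAinv₁; simpa using this
  have pSAinv₂ : ∀ x, SA (SAinv x) = x := fun x => by
    have := congrArg (fun (M : H →L[ℂ] H) => M x) hSAinv₂; simpa using this
  have pSBinv₁ : ∀ x, SBinv (SB x) = x := fun x => by
    have := congrArg (fun (M : H →L[ℂ] H) => M x) hSBinv₁; simpa using this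
  have pSBinv₂ : ∀ x, SB (SBinv x) = x := fun x => by
    have := congrArg (fun (M : H →L[ℂ] H) => M x) hSBinv₂; simpa using this
  have hadj1 : adjoint (1 : H →L[ℂ] H) = 1 := by
    rw [one_def]; exact adjoint_id
  -- similarity implies θB = θA ∘L T
  have hθcomp : ∀ T : H →L[ℂ] H, (∀ j, B j = A j ∘L T) → θB = θA ∘L T := by
    intro T hBT
    ext x
    have h1 := hθB x
    have h2 : (fun j => L j (B j x)) = fun j => L j (A j (T x)) := by
      funext j; rw [hBT j]; rfl
    rw [h2] at h1
    exact h1.unique (hθA (T x))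
  -- uniqueness of T
  have huniq : ∀ T : H →L[ℂ] H, (∀ j, B j = A j ∘L T) →
      T = SAinv ∘L (adjoint θA ∘L θB) := by
    intro T hBT
    have hθBA := hθcomp T hBT
    ext x
    simp only [comp_apply]
    have : θB x = θA (T x) := by rw [hθBA]; rfl
    rw [this, pGA, pSAinv₁]
  refine ⟨⟨?_, ?_⟩, fun T _ hBT => huniq T hBT⟩
  · -- forward: similarity → projections equal
    rintro ⟨T, hTu, hBT⟩
    obtain ⟨u, rfl⟩ := hTu
    set T : H →L[ℂ] H := (u : H →L[ℂ] H) with hTdef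
    set Ti : H →L[ℂ] H := ((u⁻¹ : (H →L[ℂ] H)ˣ) : H →L[ℂ] H) with hTidef
    have hTTi : T ∘L Ti = 1 := by rw [← mul_def]; exact u.mul_inv
    have hTiT : Ti ∘L T = 1 := by rw [← mul_def]; exact u.inv_mul
    have pTTi : ∀ x, T (Ti x) = x := fun x => by
      have := congrArg (fun (M : H →L[ℂ] H) => M x) hTTi; simpa using this
    have padj' : ∀ x, adjoint Ti (adjoint T x) = x := by
      intro x
      have h : adjoint Ti ∘L adjoint T = 1 := by
        rw [← adjoint_comp, hTTi, hadj1]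
      have := congrArg (fun (M : H →L[ℂ] H) => M x) h; simpa using this
    have hθBA : θB = θA ∘L T := hθcomp T hBT
    have pθBA : ∀ x, θB x = θA (T x) := fun x => by rw [hθBA]; rfl
    have padjθB : ∀ x, adjoint θB x = adjoint T (adjoint θA x) := by
      intro x
      rw [hθBA, adjoint_comp]; rfl
    have pSBe : ∀ x, SB x = adjoint T (SA (T x)) := by
      intro x
      rw [← pGB, pθBA]
      have : adjoint θB (θA (T x)) = adjoint T (adjoint θA (θA (T x))) := by
        rw [hθBA, adjoint_comp]; rfl
      rw [this, pGA]
    -- T ∘L SBinv ∘L adjoint T = SAinv, pointwise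
    have pC : ∀ y, SA (T (SBinv (adjoint T y))) = y := by
      intro y
      have h1 : adjoint T (SA (T (SBinv (adjoint T y)))) = adjoint T y := by
        rw [← pSBe (SBinv (adjoint T y))]
        exact pSBinv₂ (adjoint T y)
      calc SA (T (SBinv (adjoint T y)))
          = adjoint Ti (adjoint T (SA (T (SBinv (adjoint T y))))) := (padj' _).symm
        _ = adjoint Ti (adjoint T y) := by rw [h1]
        _ = y := padj' _
    have pCeq : ∀ y, T (SBinv (adjoint T y)) = SAinv y := by
      intro y
      calc T (SBinv (adjoint T y))
          = SAinv (SA (T (SBinv (adjoint T y)))) := (pSAinv₁ _).symm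
        _ = SAinv y := by rw [pC y]
    ext x
    simp only [comp_apply]
    rw [pθBA, padjθB, pCeq]
  · -- backward: projections equal → similarity
    intro hP
    have pP : ∀ y, θB (SBinv (adjoint θB y)) = θA (SAinv (adjoint θA y)) := by
      intro y
      have := congrArg (fun (M : K →L[ℂ] K) => M y) hP; simpa using this
    set T : H →L[ℂ] H := SAinv ∘L (adjoint θA ∘L θB) with hT
    set T' : H →L[ℂ] H := SBinv ∘L (adjoint θB ∘L θA) with hT'
    have pT : ∀ x, T x = SAinv (adjoint θA (θB x)) := fun x => rfl
    have pT' : ∀ x, T' x = SBinv (adjoint θB (θA x)) := fun x => rfl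
    have hBT : ∀ j, B j = A j ∘L T := by
      intro j
      ext x
      simp only [comp_apply]
      rw [pBj j, pAj j, pT, ← pP (θB x), pGB, pSBinv₁]
    have hTT' : T ∘L T' = 1 := by
      ext x
      simp only [comp_apply, one_apply]
      rw [pT', pT, pP (θA x), pGA, pSAinv₁, pGA, pSAinv₁]
      rfl
    have hT'T : T' ∘L T = 1 := by
      ext x
      simp only [comp_apply, one_apply]
      rw [pT, pT', ← pP (θB x), pGB, pSBinv₁, pGB, pSBinv₁]
      rfl
    refine ⟨T, ⟨⟨T, T', ?_, ?_⟩, rfl⟩, hBT⟩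
    · rw [mul_def]; exact hTT'
    · rw [mul_def]; exact hT'T
end

section
/- If {A_j} is a Parseval operator-valued frame and R ∈ B(H_o) is invertible, then {RA_j} is Parseval if and only if P_A(I⊗R*R)P_A = P_A, and in that case P_B = (I⊗R)P_A(I⊗R*). In particular {RA_j} is Parseval whenever R is an isometry. -/
open ContinuousLinearMap

lemma aux_key
    {H H₀ K : Type*}
    [NormedAddCommGroup H] [InnerProductSpace ℂ H] [CompleteSpace H]
    [NormedAddCommGroup H₀] [InnerProductSpace ℂ H₀] [CompleteSpace H₀]
    [NormedAddCommGroup K] [InnerProductSpace ℂ K] [CompleteSpace K]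
    {J : Type*}
    (L : J → (H₀ →L[ℂ] K))
    (hL1 : ∀ j, (adjoint (L j)) ∘L (L j) = (1 : H₀ →L[ℂ] H₀))
    (hL0 : ∀ i j, i ≠ j → (adjoint (L i)) ∘L (L j) = 0)
    (hLsum : ∀ x : K, HasSum (fun j => L j ((adjoint (L j)) x)) x)
    (B : J → (H →L[ℂ] H₀)) (θ' : H →L[ℂ] K)
    (hθ' : ∀ x, HasSum (fun j => L j (B j x)) (θ' x)) :
    ∀ x, HasSum (fun j => adjoint (B j) (B j x)) (adjoint θ' (θ' x)) := by
  have hB : ∀ i, B i = adjoint (L i) ∘L θ' := by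
    intro i
    ext x
    classical
    have h1 : HasSum (fun j => adjoint (L i) (L j (B j x))) (adjoint (L i) (θ' x)) :=
      (hθ' x).mapL (adjoint (L i))
    have h2 : HasSum (fun j => adjoint (L i) (L j (B j x))) (B i x) := by
      have heq : (fun j => adjoint (L i) (L j (B j x))) =
          (fun j => if j = i then B i x else 0) := by
        funext j
        by_cases h : j = i
        · subst h
          rw [if_pos rfl, ← comp_apply, hL1 j, ContinuousLinearMap.one_apply]
        · rw [if_neg h, ← comp_apply, hL0 i j (Ne.symm h), zero_apply]
      rw [heq]
      exact hasSum_ite_eq i (B i x)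
    simp only [comp_apply]
    exact h2.unique h1
  intro x
  have h3 : HasSum (fun j => adjoint θ' (L j (adjoint (L j) (θ' x))))
      (adjoint θ' (θ' x)) := (hLsum (θ' x)).mapL (adjoint θ')
  have : (fun j => adjoint (B j) (B j x)) =
      (fun j => adjoint θ' (L j (adjoint (L j) (θ' x)))) := by
    funext j
    rw [hB j]
    simp [adjoint_comp, adjoint_adjoint]
  rw [this]
  exact h3

/-- Let `{A_j}` be a Parseval operator-valued frame with frame projection
`P_A = θ_A θ_A*` and let `R ∈ B(H₀)` be invertible, with `IR = I⊗R` on `K = ℓ²(J)⊗H₀`.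
Then `{R A_j}` is Parseval iff `P_A (I⊗R*R) P_A = P_A`; in that case its frame
projection is `(I⊗R) P_A (I⊗R)*`. In particular `{R A_j}` is Parseval whenever `R` is
an isometry. -/
theorem stmt11
    {H H₀ K : Type*}
    [NormedAddCommGroup H] [InnerProductSpace ℂ H] [CompleteSpace H]
    [NormedAddCommGroup H₀] [InnerProductSpace ℂ H₀] [CompleteSpace H₀]
    [NormedAddCommGroup K] [InnerProductSpace ℂ K] [CompleteSpace K]
    {J : Type*}
    (L : J → (H₀ →L[ℂ] K))
    (hL1 : ∀ j, (adjoint (L j)) ∘L (L j) = (1 : H₀ →L[ℂ] H₀))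
    (hL0 : ∀ i j, i ≠ j → (adjoint (L i)) ∘L (L j) = 0)
    (hLsum : ∀ x : K, HasSum (fun j => L j ((adjoint (L j)) x)) x)
    (A : J → (H →L[ℂ] H₀))
    (θ : H →L[ℂ] K)
    (hθ : ∀ x, HasSum (fun j => L j (A j x)) (θ x))
    (hPars : adjoint θ ∘L θ = 1)
    (R Rinv : H₀ →L[ℂ] H₀) (hR₁ : Rinv ∘L R = 1) (hR₂ : R ∘L Rinv = 1)
    (IR : K →L[ℂ] K) (hIR : ∀ j, IR ∘L L j = L j ∘L R) :
    ((∀ x, HasSum (fun j => adjoint (R ∘L A j) ((R ∘L A j) x)) x) ↔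
      (θ ∘L adjoint θ) ∘L ((adjoint IR ∘L IR) ∘L (θ ∘L adjoint θ)) =
        θ ∘L adjoint θ) ∧
    ((∀ x, HasSum (fun j => adjoint (R ∘L A j) ((R ∘L A j) x)) x) →
      (IR ∘L θ) ∘L adjoint (IR ∘L θ) =
        (IR ∘L (θ ∘L adjoint θ)) ∘L adjoint IR) ∧
    (adjoint R ∘L R = 1 →
      ∀ x, HasSum (fun j => adjoint (R ∘L A j) ((R ∘L A j) x)) x) := by
  -- pointwise Parseval for θ
  have hParsx : ∀ x, adjoint θ (θ x) = x := by
    intro x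
    have := congrArg (fun T => T x) hPars
    simpa [comp_apply] using this
  -- θ' = IR ∘L θ is the analysis operator of {R A_j}
  set θ' : H →L[ℂ] K := IR ∘L θ with hθ'def
  have hθ' : ∀ x, HasSum (fun j => L j ((R ∘L A j) x)) (θ' x) := by
    intro x
    have h1 : HasSum (fun j => IR (L j (A j x))) (IR (θ x)) := (hθ x).mapL IR
    have : (fun j => IR (L j (A j x))) = (fun j => L j ((R ∘L A j) x)) := by
      funext j
      have := congrArg (fun T => T (A j x)) (hIR j)
      simpa [comp_apply] using this
    rw [this] at h1
    exact h1
  have hsum' : ∀ x, HasSum (fun j => adjoint (R ∘L A j) ((R ∘L A j) x))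
      (adjoint θ' (θ' x)) :=
    aux_key L hL1 hL0 hLsum (fun j => R ∘L A j) θ' hθ'
  -- frame condition ↔ adjoint θ' ∘ θ' = 1
  have hframe : (∀ x, HasSum (fun j => adjoint (R ∘L A j) ((R ∘L A j) x)) x) ↔
      adjoint θ' ∘L θ' = 1 := by
    constructor
    · intro h
      ext x
      simpa [comp_apply] using ((hsum' x).unique (h x))
    · intro h x
      have hx : adjoint θ' (θ' x) = x := by
        have := congrArg (fun T => T x) h
        simpa [comp_apply] using this
      have := hsum' x
      rwa [hx] at this
  -- adjoint θ' ∘ θ' expanded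
  have hθ'ad : adjoint θ' ∘L θ' = adjoint θ ∘L ((adjoint IR ∘L IR) ∘L θ) := by
    rw [hθ'def, adjoint_comp]
    ext x; simp [comp_apply]
  refine ⟨?_, ?_, ?_⟩
  · rw [hframe, hθ'ad]
    constructor
    · intro h
      ext x
      have h1 := congrArg (fun T => T (adjoint θ x)) h
      simp only [comp_apply, ContinuousLinearMap.one_apply] at h1
      simp only [comp_apply]
      rw [h1]
    · intro h
      ext x
      have := congrArg (fun T => T (θ x)) h
      simp only [comp_apply, hParsx] at this
      have := congrArg (adjoint θ) this
      simpa [hParsx] using this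
  · intro _
    rw [hθ'def, adjoint_comp]
    ext x; simp [comp_apply]
  · intro hiso x
    have hisox : ∀ y, adjoint R (R y) = y := by
      intro y
      have := congrArg (fun T => T y) hiso
      simpa [comp_apply] using this
    have hA : ∀ x, HasSum (fun j => adjoint (A j) (A j x)) x := by
      intro x
      have := aux_key L hL1 hL0 hLsum A θ hθ x
      rwa [hParsx x] at this
    have : (fun j => adjoint (R ∘L A j) ((R ∘L A j) x)) =
        (fun j => adjoint (A j) (A j x)) := by
      funext j
      simp [adjoint_comp, comp_apply, hisox]
    rw [this]
    exact hA x
end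

section
/- Let {A_j} be a Parseval operator-valued frame and R ∈ B(H_o) a unitary. Then {RA_j} is right-similar to {A_j} if and only if (I⊗R)P_A = P_A(I⊗R), i.e., I⊗R commutes with the frame projection P_A. -/
open ContinuousLinearMap

set_option maxHeartbeats 1600000 in
/-- Let `{A_j}` be a Parseval operator-valued frame with frame projection
`P_A = θ_A θ_A*` and let `R ∈ B(H₀)` be unitary, with `IR = I⊗R` on `K = ℓ²(J)⊗H₀`.
Then `{R A_j}` is right-similar to `{A_j}` (i.e. `R A_j = A_j T` for some invertible
`T ∈ B(H)`) if and only if `I⊗R` commutes with `P_A`. -/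
theorem stmt12
    {H H₀ K : Type*}
    [NormedAddCommGroup H] [InnerProductSpace ℂ H] [CompleteSpace H]
    [NormedAddCommGroup H₀] [InnerProductSpace ℂ H₀] [CompleteSpace H₀]
    [NormedAddCommGroup K] [InnerProductSpace ℂ K] [CompleteSpace K]
    {J : Type*}
    (L : J → (H₀ →L[ℂ] K))
    (hL1 : ∀ j, (adjoint (L j)) ∘L (L j) = (1 : H₀ →L[ℂ] H₀))
    (hL0 : ∀ i j, i ≠ j → (adjoint (L i)) ∘L (L j) = 0)
    (hLsum : ∀ x : K, HasSum (fun j => L j ((adjoint (L j)) x)) x)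
    (A : J → (H →L[ℂ] H₀))
    (θ : H →L[ℂ] K)
    (hθ : ∀ x, HasSum (fun j => L j (A j x)) (θ x))
    (hPars : adjoint θ ∘L θ = 1)
    (R : H₀ →L[ℂ] H₀) (hR₁ : adjoint R ∘L R = 1) (hR₂ : R ∘L adjoint R = 1)
    (IR : K →L[ℂ] K) (hIR : ∀ j, IR ∘L L j = L j ∘L R) :
    (∃ T : H →L[ℂ] H, IsUnit T ∧ ∀ j, R ∘L A j = A j ∘L T) ↔
      IR ∘L (θ ∘L adjoint θ) = (θ ∘L adjoint θ) ∘L IR := by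
  -- pointwise versions of hypotheses
  have hL1' : ∀ j (x : H₀), adjoint (L j) (L j x) = x := fun j x => by
    simpa using ContinuousLinearMap.ext_iff.mp (hL1 j) x
  have hL0' : ∀ i j, i ≠ j → ∀ x : H₀, adjoint (L i) (L j x) = 0 := fun i j hij x => by
    simpa using ContinuousLinearMap.ext_iff.mp (hL0 i j hij) x
  have hR₁' : ∀ x : H₀, adjoint R (R x) = x := fun x => by
    simpa using ContinuousLinearMap.ext_iff.mp hR₁ x
  have hR₂' : ∀ x : H₀, R (adjoint R x) = x := fun x => by
    simpa using ContinuousLinearMap.ext_iff.mp hR₂ x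
  have hP' : ∀ x : H, adjoint θ (θ x) = x := fun x => by
    simpa using ContinuousLinearMap.ext_iff.mp hPars x
  have hIR' : ∀ j (x : H₀), IR (L j x) = L j (R x) := fun j x => by
    simpa using ContinuousLinearMap.ext_iff.mp (hIR j) x
  -- A j = L j* ∘ θ
  have hA : ∀ j (x : H), A j x = adjoint (L j) (θ x) := by
    intro j x
    have h1 : HasSum (fun i => adjoint (L j) (L i (A i x))) (adjoint (L j) (θ x)) :=
      (hθ x).mapL (adjoint (L j))
    have h2 : HasSum (fun i => adjoint (L j) (L i (A i x))) (A j x) := by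
      have := hasSum_single (f := fun i => adjoint (L j) (L i (A i x))) j
        (fun i hi => hL0' j i (Ne.symm hi) _)
      simpa [hL1' j] using this
    exact h2.unique h1
  -- IR as a sum
  have hIRsum : ∀ y : K, HasSum (fun i => L i (R (adjoint (L i) y))) (IR y) := by
    intro y
    have := (hLsum y).mapL IR
    simpa [hIR'] using this
  -- L j* ∘ IR = R ∘ L j*
  have hLIR : ∀ j (y : K), adjoint (L j) (IR y) = R (adjoint (L j) y) := by
    intro j y
    have h1 : HasSum (fun i => adjoint (L j) (L i (R (adjoint (L i) y))))
        (adjoint (L j) (IR y)) := (hIRsum y).mapL (adjoint (L j))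
    have h2 : HasSum (fun i => adjoint (L j) (L i (R (adjoint (L i) y))))
        (R (adjoint (L j) y)) := by
      have := hasSum_single (f := fun i => adjoint (L j) (L i (R (adjoint (L i) y)))) j
        (fun i hi => hL0' j i (Ne.symm hi) _)
      simpa [hL1' j] using this
    exact h1.unique h2
  have hLIRc : ∀ j, adjoint (L j) ∘L IR = R ∘L adjoint (L j) := by
    intro j; ext y; simpa using hLIR j y
  -- IR* ∘ L j = L j ∘ R*
  have hIRadj : ∀ j (x : H₀), adjoint IR (L j x) = L j (adjoint R x) := by
    intro j x
    have h := congrArg adjoint (hLIRc j)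
    rw [adjoint_comp, adjoint_comp, adjoint_adjoint] at h
    simpa using ContinuousLinearMap.ext_iff.mp h x
  have hIRadjsum : ∀ y : K,
      HasSum (fun i => L i (adjoint R (adjoint (L i) y))) (adjoint IR y) := by
    intro y
    have := (hLsum y).mapL (adjoint IR)
    simpa [hIRadj] using this
  -- IR is unitary
  have hU1 : ∀ y : K, adjoint IR (IR y) = y := by
    intro y
    have h1 := (hIRsum y).mapL (adjoint IR)
    have h1' : HasSum (fun i => L i (adjoint (L i) y)) (adjoint IR (IR y)) := by
      simpa [hIRadj, hR₁'] using h1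
    exact h1'.unique (hLsum y)
  have hU2 : ∀ y : K, IR (adjoint IR y) = y := by
    intro y
    have h1 := (hIRadjsum y).mapL IR
    have h1' : HasSum (fun i => L i (adjoint (L i) y)) (IR (adjoint IR y)) := by
      simpa [hIR', hR₂'] using h1
    exact h1'.unique (hLsum y)
  constructor
  · rintro ⟨T, hT, hRA⟩
    have hRA' : ∀ j (x : H), R (A j x) = A j (T x) := fun j x => by
      simpa using ContinuousLinearMap.ext_iff.mp (hRA j) x
    have hθT : ∀ x : H, IR (θ x) = θ (T x) := by
      intro x
      have h1 := (hθ x).mapL IR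
      have h1' : HasSum (fun j => L j (A j (T x))) (IR (θ x)) := by
        simpa [hIR', hRA'] using h1
      exact h1'.unique (hθ (T x))
    obtain ⟨U, hU⟩ := hT
    set T' : H →L[ℂ] H := ↑U⁻¹ with hT'def
    have hTT' : ∀ x : H, T (T' x) = x := by
      intro x
      have := ContinuousLinearMap.ext_iff.mp U.mul_inv x
      simpa [hU, ContinuousLinearMap.mul_apply] using this
    have hT'T : ∀ x : H, T' (T x) = x := by
      intro x
      have := ContinuousLinearMap.ext_iff.mp U.inv_mul x
      simpa [hU, ContinuousLinearMap.mul_apply] using this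
    have hR'A : ∀ j (x : H), adjoint R (A j x) = A j (T' x) := by
      intro j x
      have h1 : adjoint R (A j (T (T' x))) = A j (T' x) := by
        rw [← hRA' j (T' x), hR₁']
      rwa [hTT'] at h1
    have hθT' : ∀ x : H, adjoint IR (θ x) = θ (T' x) := by
      intro x
      have h1 := (hθ x).mapL (adjoint IR)
      have h1' : HasSum (fun j => L j (A j (T' x))) (adjoint IR (θ x)) := by
        simpa [hIRadj, hR'A] using h1
      exact h1'.unique (hθ (T' x))
    have hc1 : adjoint IR ∘L θ = θ ∘L T' := by
      ext x; simpa using hθT' x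
    have hc2 : adjoint θ ∘L IR = adjoint T' ∘L adjoint θ := by
      have h := congrArg adjoint hc1
      rwa [adjoint_comp, adjoint_comp, adjoint_adjoint] at h
    have hTadj : adjoint T' = T := by
      have e1 : adjoint θ ∘L (adjoint IR ∘L θ) = T' := by
        ext x
        simp only [comp_apply, hθT' x, hP']
      have h := congrArg adjoint e1
      rw [adjoint_comp, adjoint_comp, adjoint_adjoint, adjoint_adjoint] at h
      rw [← h]
      ext x
      simp only [comp_apply, hθT x, hP']
    ext y
    have hy : adjoint θ (IR y) = T (adjoint θ y) := by
      have := ContinuousLinearMap.ext_iff.mp hc2 y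
      simpa [hTadj] using this
    simp only [comp_apply, hy, hθT]
  · intro hcomm
    have hPcomm : ∀ z : K, IR (θ (adjoint θ z)) = θ (adjoint θ (IR z)) := by
      intro z
      simpa using ContinuousLinearMap.ext_iff.mp hcomm z
    have hPcomm' : ∀ z : K, adjoint IR (θ (adjoint θ z)) = θ (adjoint θ (adjoint IR z)) := by
      intro z
      have h := congrArg adjoint hcomm
      rw [adjoint_comp, adjoint_comp, adjoint_comp, adjoint_adjoint] at h
      simpa using (ContinuousLinearMap.ext_iff.mp h z).symm
    set T : H →L[ℂ] H := adjoint θ ∘L (IR ∘L θ) with hTdef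
    set T' : H →L[ℂ] H := adjoint θ ∘L (adjoint IR ∘L θ) with hT'def
    have hθT : ∀ x : H, θ (T x) = IR (θ x) := by
      intro x
      have : θ (T x) = θ (adjoint θ (IR (θ x))) := by simp [hTdef]
      rw [this, ← hPcomm (θ x), hP']
    have hθT' : ∀ x : H, θ (T' x) = adjoint IR (θ x) := by
      intro x
      have : θ (T' x) = θ (adjoint θ (adjoint IR (θ x))) := by simp [hT'def]
      rw [this, ← hPcomm' (θ x), hP']
    have hTT' : ∀ x : H, T (T' x) = x := by
      intro x
      have : T (T' x) = adjoint θ (IR (θ (T' x))) := by simp [hTdef]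
      rw [this, hθT', hU2, hP']
    have hT'T : ∀ x : H, T' (T x) = x := by
      intro x
      have : T' (T x) = adjoint θ (adjoint IR (θ (T x))) := by simp [hT'def]
      rw [this, hθT, hU1, hP']
    refine ⟨T, ⟨⟨T, T', ?_, ?_⟩, rfl⟩, ?_⟩
    · ext x; simp [ContinuousLinearMap.mul_apply, hTT']
    · ext x; simp [ContinuousLinearMap.mul_apply, hT'T]
    · intro j
      ext x
      simp only [comp_apply]
      rw [hA j x, hA j (T x), ← hLIR, hθT]
end

section
/- An operator-valued frame {B_j} is a dual of {A_j} (i.e., θ_B*θ_A = I) if and only if Σ_{j∈J} B_j*A_j = I in the strong operator topology. If moreover {B_j} is both right-similar to and a dual of {A_j}, then B_j = A_j S_A^{-1} for all j (i.e., B is the canonical dual). -/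
open ContinuousLinearMap

/-- An operator-valued frame `{B_j}` is a dual of `{A_j}`
(`θ_B* θ_A = 1`) iff `Σ_j B_j* A_j = 1` in the strong operator topology. Moreover if
`{B_j}` is both right-similar to and a dual of `{A_j}`, then `B_j = A_j S_A⁻¹` for all
`j`, i.e. `{B_j}` is the canonical dual. -/
theorem stmt14
    {H H₀ K : Type*}
    [NormedAddCommGroup H] [InnerProductSpace ℂ H] [CompleteSpace H]
    [NormedAddCommGroup H₀] [InnerProductSpace ℂ H₀] [CompleteSpace H₀]
    [NormedAddCommGroup K] [InnerProductSpace ℂ K] [CompleteSpace K]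
    {J : Type*}
    (L : J → (H₀ →L[ℂ] K))
    (hL1 : ∀ j, (adjoint (L j)) ∘L (L j) = (1 : H₀ →L[ℂ] H₀))
    (hL0 : ∀ i j, i ≠ j → (adjoint (L i)) ∘L (L j) = 0)
    (hLsum : ∀ x : K, HasSum (fun j => L j ((adjoint (L j)) x)) x)
    (A B : J → (H →L[ℂ] H₀))
    (SA SB : H →L[ℂ] H)
    (hSA : ∀ x, HasSum (fun j => adjoint (A j) (A j x)) (SA x))
    (hSB : ∀ x, HasSum (fun j => adjoint (B j) (B j x)) (SB x))
    (hSApos : SA.IsPositive) (hSBpos : SB.IsPositive)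
    (SAinv : H →L[ℂ] H) (hSAinv₁ : SAinv ∘L SA = 1) (hSAinv₂ : SA ∘L SAinv = 1)
    (hSBinv : IsUnit SB)
    (θA θB : H →L[ℂ] K)
    (hθA : ∀ x, HasSum (fun j => L j (A j x)) (θA x))
    (hθB : ∀ x, HasSum (fun j => L j (B j x)) (θB x)) :
    ((adjoint θB ∘L θA = 1) ↔
      ∀ x, HasSum (fun j => adjoint (B j) (A j x)) x) ∧
    (adjoint θB ∘L θA = 1 →
      ∀ T : H →L[ℂ] H, IsUnit T → (∀ j, B j = A j ∘L T) →
        ∀ j, B j = A j ∘L SAinv) := by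
  classical
  -- B j = adjoint (L j) ∘L θB
  have hBj : ∀ j, B j = adjoint (L j) ∘L θB := by
    intro j
    ext x
    have h1 : HasSum (fun i => adjoint (L j) (L i (B i x))) (adjoint (L j) (θB x)) :=
      (adjoint (L j)).hasSum (hθB x)
    have h2 : HasSum (fun i => adjoint (L j) (L i (B i x))) (B j x) := by
      have : ∀ i, adjoint (L j) (L i (B i x)) = if i = j then B j x else 0 := by
        intro i
        by_cases hij : i = j
        · subst hij
          have := congrArg (fun f : H₀ →L[ℂ] H₀ => f (B i x)) (hL1 i)
          simpa using this
        · have := congrArg (fun f : H₀ →L[ℂ] H₀ => f (B i x)) (hL0 j i (Ne.symm hij))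
          simpa [hij] using this
      rw [funext this]
      exact hasSum_ite_eq j (B j x)
    exact ((h2.unique h1).symm : (adjoint (L j)) (θB x) = B j x).symm ▸ rfl
  -- adjoint (B j) = adjoint θB ∘L L j
  have hBadj : ∀ j, adjoint (B j) = adjoint θB ∘L L j := by
    intro j
    rw [hBj j, adjoint_comp, adjoint_adjoint]
  -- key sum
  have hkey : ∀ x, HasSum (fun j => adjoint (B j) (A j x)) ((adjoint θB) (θA x)) := by
    intro x
    have h1 : HasSum (fun j => adjoint θB (L j (A j x))) (adjoint θB (θA x)) :=
      (adjoint θB).hasSum (hθA x)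
    convert h1 using 2 with j
    rw [hBadj j]; rfl
  have hiff : (adjoint θB ∘L θA = 1) ↔
      ∀ x, HasSum (fun j => adjoint (B j) (A j x)) x := by
    constructor
    · intro h x
      have := hkey x
      have hx : (adjoint θB) (θA x) = x := by
        have := congrArg (fun f : H →L[ℂ] H => f x) h
        simpa using this
      rwa [hx] at this
    · intro h
      ext x
      have := (hkey x).unique (h x)
      simpa using this
  refine ⟨hiff, ?_⟩
  intro hdual T hT hBT j
  -- T* ∘L SA = 1
  have hTS : adjoint T ∘L SA = 1 := by
    ext x
    have h1 : HasSum (fun j => adjoint (B j) (A j x)) x := hiff.mp hdual x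
    have h2 : HasSum (fun j => adjoint (B j) (A j x)) (adjoint T (SA x)) := by
      have h3 : HasSum (fun j => adjoint T (adjoint (A j) (A j x))) (adjoint T (SA x)) :=
        (adjoint T).hasSum (hSA x)
      convert h3 using 2 with i
      rw [hBT i, adjoint_comp]
      rfl
    have := h1.unique h2
    simpa using this.symm
  -- so adjoint T = SAinv
  have hTinv : adjoint T = SAinv := by
    calc adjoint T = adjoint T ∘L (SA ∘L SAinv) := by rw [hSAinv₂, one_def, comp_id]
    _ = (adjoint T ∘L SA) ∘L SAinv := by rw [comp_assoc]
    _ = SAinv := by rw [hTS, one_def, id_comp]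
  -- SAinv is self-adjoint since SA is
  have hSAsa : adjoint SA = SA := hSApos.isSelfAdjoint.adjoint_eq
  have hSAinvsa : adjoint SAinv = SAinv := by
    have h1 : adjoint SAinv ∘L SA = 1 := by
      have := congrArg adjoint hSAinv₂
      rwa [adjoint_comp, hSAsa, one_def, adjoint_id, ← one_def] at this
    calc adjoint SAinv = adjoint SAinv ∘L (SA ∘L SAinv) := by rw [hSAinv₂, one_def, comp_id]
    _ = (adjoint SAinv ∘L SA) ∘L SAinv := by rw [comp_assoc]
    _ = SAinv := by rw [h1, one_def, id_comp]
  have hTeq : T = SAinv := by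
    rw [← adjoint_adjoint (A := T), hTinv, hSAinvsa]
  rw [hBT j, hTeq]
end

section
/- Two Parseval operator-valued frames {A_j} ⊂ B(H_A,H_o) and {B_j} ⊂ B(H_B,H_o) are strongly disjoint (i.e., {A_j ⊕ B_j} is a Parseval frame on H_A ⊕ H_B) if and only if θ_A*θ_B = 0, if and only if their frame projections are orthogonal: P_A P_B = 0. -/
open ContinuousLinearMap

theorem aux_adj
    {H H₀ K : Type*}
    [NormedAddCommGroup H] [InnerProductSpace ℂ H] [CompleteSpace H]
    [NormedAddCommGroup H₀] [InnerProductSpace ℂ H₀] [CompleteSpace H₀]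
    [NormedAddCommGroup K] [InnerProductSpace ℂ K] [CompleteSpace K]
    {J : Type*}
    (L : J → (H₀ →L[ℂ] K))
    (hL1 : ∀ j, (adjoint (L j)) ∘L (L j) = (1 : H₀ →L[ℂ] H₀))
    (hL0 : ∀ i j, i ≠ j → (adjoint (L i)) ∘L (L j) = 0)
    (T : H →L[ℂ] K) (D : J → (H →L[ℂ] H₀))
    (hT : ∀ x, HasSum (fun j => L j (D j x)) (T x)) (j : J) :
    adjoint T ∘L L j = adjoint (D j) := by
  classical
  ext u
  apply ext_inner_right ℂ
  intro x
  rw [comp_apply, adjoint_inner_left, adjoint_inner_left]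
  have h1 : HasSum (fun i => (inner ℂ (L j u) (L i (D i x)) : ℂ))
      (inner ℂ (L j u) (T x)) := (innerSL ℂ (L j u)).hasSum (hT x)
  have h2 : (fun i => (inner ℂ (L j u) (L i (D i x)) : ℂ)) =
      fun i => if i = j then (inner ℂ u (D j x) : ℂ) else 0 := by
    funext i
    rw [← adjoint_inner_left (L i)]
    by_cases hij : i = j
    · subst hij
      have : adjoint (L i) (L i u) = u := by
        have := congrArg (fun f => f u) (hL1 i); simpa using this
      rw [this, if_pos rfl]
    · have : adjoint (L i) (L j u) = 0 := by
        have := congrArg (fun f => f u) (hL0 i j hij); simpa using this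
      rw [this, if_neg hij, inner_zero_left]
  rw [h2] at h1
  exact (h1.unique (hasSum_ite_eq j _))

set_option maxHeartbeats 1000000 in
set_option synthInstance.maxHeartbeats 400000 in
/-- Two Parseval operator-valued frames `{A_j} ⊂ B(H_A,H₀)` and
`{B_j} ⊂ B(H_B,H₀)` are strongly disjoint (i.e. `{A_j ⊕ B_j}`, acting on the Hilbert
direct sum `H_A ⊕₂ H_B` by `(x,y) ↦ A_j x + B_j y`, is a Parseval frame) if and only
if `θ_A* θ_B = 0`, if and only if their frame projections are orthogonal:
`P_A P_B = 0`. -/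
theorem stmt16
    {HA HB H₀ K : Type*}
    [NormedAddCommGroup HA] [InnerProductSpace ℂ HA] [CompleteSpace HA]
    [NormedAddCommGroup HB] [InnerProductSpace ℂ HB] [CompleteSpace HB]
    [NormedAddCommGroup H₀] [InnerProductSpace ℂ H₀] [CompleteSpace H₀]
    [NormedAddCommGroup K] [InnerProductSpace ℂ K] [CompleteSpace K]
    {J : Type*}
    (L : J → (H₀ →L[ℂ] K))
    (hL1 : ∀ j, (adjoint (L j)) ∘L (L j) = (1 : H₀ →L[ℂ] H₀))
    (hL0 : ∀ i j, i ≠ j → (adjoint (L i)) ∘L (L j) = 0)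
    (hLsum : ∀ x : K, HasSum (fun j => L j ((adjoint (L j)) x)) x)
    (A : J → (HA →L[ℂ] H₀)) (B : J → (HB →L[ℂ] H₀))
    (θA : HA →L[ℂ] K) (θB : HB →L[ℂ] K)
    (hθA : ∀ x, HasSum (fun j => L j (A j x)) (θA x))
    (hθB : ∀ y, HasSum (fun j => L j (B j y)) (θB y))
    (hAPars : adjoint θA ∘L θA = 1)
    (hBPars : adjoint θB ∘L θB = 1)
    -- the direct-sum frame `C_j(x ⊕ y) = A_j x + B_j y` on the Hilbert space
    -- `H_A ⊕₂ H_B = WithLp 2 (HA × HB)`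
    (C : J → (WithLp 2 (HA × HB) →L[ℂ] H₀))
    (hC : ∀ j, C j = ((A j).coprod (B j)) ∘L
      ((WithLp.prodContinuousLinearEquiv 2 ℂ HA HB :
        WithLp 2 (HA × HB) ≃L[ℂ] HA × HB) : WithLp 2 (HA × HB) →L[ℂ] HA × HB)) :
    ((∀ z, HasSum (fun j => adjoint (C j) (C j z)) z) ↔
        adjoint θA ∘L θB = 0) ∧
    ((adjoint θA ∘L θB = 0) ↔
        (θA ∘L adjoint θA) ∘L (θB ∘L adjoint θB) = 0) := by
  have hA' : ∀ x, adjoint θA (θA x) = x := fun x => by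
    have := congrArg (fun f => f x) hAPars; simpa using this
  have hB' : ∀ y, adjoint θB (θB y) = y := fun y => by
    have := congrArg (fun f => f y) hBPars; simpa using this
  -- the analysis operator of the direct-sum family
  set θC : WithLp 2 (HA × HB) →L[ℂ] K :=
    ((θA.coprod θB) ∘L
      ((WithLp.prodContinuousLinearEquiv 2 ℂ HA HB :
        WithLp 2 (HA × HB) ≃L[ℂ] HA × HB) : WithLp 2 (HA × HB) →L[ℂ] HA × HB)) with hθCdef
  have hθCapp : ∀ z : WithLp 2 (HA × HB), θC z = θA z.fst + θB z.snd := fun z => rfl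
  have hCapp : ∀ j (z : WithLp 2 (HA × HB)), C j z = A j z.fst + B j z.snd := by
    intro j z; rw [hC j]; rfl
  have hθC : ∀ z, HasSum (fun j => L j (C j z)) (θC z) := by
    intro z
    have h := (hθA z.fst).add (hθB z.snd)
    rw [← hθCapp] at h
    convert h using 2 with j
    rw [hCapp, map_add]
  have hadj : ∀ j, adjoint θC ∘L L j = adjoint (C j) :=
    aux_adj L hL1 hL0 θC C hθC
  have hCj : ∀ j (z : WithLp 2 (HA × HB)), C j z = adjoint (L j) (θC z) := by
    intro j z
    have := congrArg adjoint (hadj j)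
    rw [adjoint_comp, adjoint_adjoint, adjoint_adjoint] at this
    rw [← this]; rfl
  have hkey : ∀ z, HasSum (fun j => adjoint (C j) (C j z)) (adjoint θC (θC z)) := by
    intro z
    have h := (adjoint θC).hasSum (hLsum (θC z))
    have e : (fun j => adjoint (C j) (C j z)) =
        fun b => (adjoint θC) ((L b) ((adjoint (L b)) (θC z))) := by
      funext j; rw [← hadj j, hCj j z]; rfl
    rw [e]; exact h
  constructor
  · constructor
    · -- Parseval ⇒ θA* θB = 0
      intro h
      have hI : ∀ z, adjoint θC (θC z) = z := fun z => (hkey z).unique (h z)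
      have horth : ∀ (y : HB) (x : HA), (inner ℂ (θB y) (θA x) : ℂ) = 0 := by
        intro y x
        set z0 : WithLp 2 (HA × HB) := (WithLp.equiv 2 (HA × HB)).symm (x, 0) with hz0
        set w0 : WithLp 2 (HA × HB) := (WithLp.equiv 2 (HA × HB)).symm (0, y) with hw0
        have hz0' : θC z0 = θA x := by rw [hθCapp]; simp [hz0]
        have hw0' : θC w0 = θB y := by rw [hθCapp]; simp [hw0]
        calc (inner ℂ (θB y) (θA x) : ℂ) = inner ℂ (θC w0) (θC z0) := by rw [hz0', hw0']
          _ = inner ℂ (adjoint θC (θC w0)) z0 := by rw [adjoint_inner_left]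
          _ = inner ℂ w0 z0 := by rw [hI w0]
          _ = 0 := by
              rw [WithLp.prod_inner_apply]
              simp [hz0, hw0]
      ext y
      rw [comp_apply, zero_apply, ← inner_self_eq_zero (𝕜 := ℂ),
        adjoint_inner_left]
      exact horth y _
    · -- θA* θB = 0 ⇒ Parseval
      intro h
      have h' : ∀ y, adjoint θA (θB y) = 0 := fun y => by
        have := congrArg (fun f => f y) h; simpa using this
      intro z
      have hz : adjoint θC (θC z) = z := by
        apply ext_inner_right ℂ
        intro w
        rw [adjoint_inner_left, hθCapp z, hθCapp w, inner_add_left, inner_add_right,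
          inner_add_right, WithLp.prod_inner_apply]
        have e1 : (inner ℂ (θA z.fst) (θA w.fst) : ℂ) = inner ℂ z.fst w.fst := by
          rw [← adjoint_inner_left, hA']
        have e2 : (inner ℂ (θB z.snd) (θB w.snd) : ℂ) = inner ℂ z.snd w.snd := by
          rw [← adjoint_inner_left, hB']
        have e3 : (inner ℂ (θA z.fst) (θB w.snd) : ℂ) = 0 := by
          rw [← adjoint_inner_right θA, h', inner_zero_right]
        have e4 : (inner ℂ (θB z.snd) (θA w.fst) : ℂ) = 0 := by
          rw [← adjoint_inner_left θA, h', inner_zero_left]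
        rw [e1, e2, e3, e4]
        ring_nf; rfl
      have hk := hkey z
      rwa [hz] at hk
  · constructor
    · intro h
      have h' : ∀ y, adjoint θA (θB y) = 0 := fun y => by
        have := congrArg (fun f => f y) h; simpa using this
      ext y
      simp [comp_apply, h']
    · intro h
      have h' : ∀ y : HB, θA (adjoint θA (θB (adjoint θB (θB y)))) = 0 := fun y => by
        have := congrArg (fun f => f (θB y)) h; simpa using this
      ext y
      rw [comp_apply, zero_apply]
      have := h' y
      rw [hB'] at this
      have h2 := congrArg (adjoint θA) this
      rw [hA', map_zero] at h2
      exact h2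
end

section
/- Let A ∈ B(H,H_o) be a frame generator for a unitary representation (G,π,H) of a discrete group G, i.e., {A_g := Aπ_{g^{-1}}}_{g∈G} is an operator-valued frame. Then θ_A π_g = (λ_g ⊗ I_o) θ_A for all g ∈ G, where λ is the left regular representation of G on ℓ²(G). Consequently, for any two frame generators A, B for (G,π,H), the operator θ_A*θ_B commutes with π(G); in particular S_A ∈ π(G)' and A S_A^{-1/2} is a Parseval frame generator. -/
open ContinuousLinearMap

set_option maxHeartbeats 1000000 in
set_option synthInstance.maxHeartbeats 1000000 in
/-- Let `A ∈ B(H,H₀)` be a frame generator for a unitary representation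
`(G,π,H)` of a discrete group `G`, i.e. `{A π_{g⁻¹}}_{g∈G}` is an operator-valued
frame with analysis operator `θ_A`. Then:
(i) `θ_A π_g = (λ_g ⊗ I₀) θ_A` for all `g`, where `lam g` is the operator
`λ_g ⊗ I₀` on `K = ℓ²(G)⊗H₀`, characterized by `lam g ∘ L_q = L_{gq}`;
(ii) for any two frame generators `A, B`, the operator `θ_A* θ_B` commutes with every
`π_g`; in particular `S_A ∈ π(G)'`;
(iii) `A S_A^{-1/2}` is a Parseval frame generator. -/
theorem stmt17
    {H H₀ K : Type*}
    [NormedAddCommGroup H] [InnerProductSpace ℂ H] [CompleteSpace H]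
    [NormedAddCommGroup H₀] [InnerProductSpace ℂ H₀] [CompleteSpace H₀]
    [NormedAddCommGroup K] [InnerProductSpace ℂ K] [CompleteSpace K]
    {G : Type*} [Group G]
    (π : G →* (H →L[ℂ] H)) (hπ : ∀ g, adjoint (π g) = π g⁻¹)
    (L : G → (H₀ →L[ℂ] K))
    (hL1 : ∀ g, (adjoint (L g)) ∘L (L g) = (1 : H₀ →L[ℂ] H₀))
    (hL0 : ∀ g q, g ≠ q → (adjoint (L g)) ∘L (L q) = 0)
    (hLsum : ∀ x : K, HasSum (fun g => L g ((adjoint (L g)) x)) x)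
    (lam : G → (K →L[ℂ] K))
    (hlamU : ∀ g, adjoint (lam g) ∘L lam g = 1 ∧ lam g ∘L adjoint (lam g) = 1)
    (hlam : ∀ g q, lam g ∘L L q = L (g * q))
    (A : H →L[ℂ] H₀)
    (SA : H →L[ℂ] H)
    (hSA : ∀ x, HasSum (fun g => adjoint (A ∘L π g⁻¹) ((A ∘L π g⁻¹) x)) (SA x))
    (hSApos : SA.IsPositive) (hSAinv : IsUnit SA)
    (θA : H →L[ℂ] K)
    (hθA : ∀ x, HasSum (fun g => L g ((A ∘L π g⁻¹) x)) (θA x)) :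
    (∀ g, θA ∘L π g = lam g ∘L θA) ∧
    (∀ (B : H →L[ℂ] H₀) (SB : H →L[ℂ] H) (θB : H →L[ℂ] K),
      (∀ x, HasSum (fun g => adjoint (B ∘L π g⁻¹) ((B ∘L π g⁻¹) x)) (SB x)) →
      SB.IsPositive → IsUnit SB →
      (∀ x, HasSum (fun g => L g ((B ∘L π g⁻¹) x)) (θB x)) →
      ∀ g, (adjoint θA ∘L θB) ∘L π g = π g ∘L (adjoint θA ∘L θB)) ∧
    (∀ g, SA ∘L π g = π g ∘L SA) ∧
    (∀ R : H →L[ℂ] H, R.IsPositive →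
      (R ∘L R) ∘L SA = 1 → SA ∘L (R ∘L R) = 1 →
      ∀ x, HasSum
        (fun g => adjoint ((A ∘L R) ∘L π g⁻¹) (((A ∘L R) ∘L π g⁻¹) x)) x) := by
  classical
  -- Two operators `K →L K` agreeing after composition with every `L q` are equal.
  have extL : ∀ (T T' : K →L[ℂ] K), (∀ q, T ∘L L q = T' ∘L L q) → T = T' := by
    intro T T' h
    ext x
    have h1 := T.hasSum (hLsum x)
    have h2 := T'.hasSum (hLsum x)
    refine h1.unique ?_
    have hf : (fun g => T (L g ((adjoint (L g)) x)))
        = (fun g => T' (L g ((adjoint (L g)) x))) := by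
      funext g
      have := congrArg (fun (S : H₀ →L[ℂ] K) => S ((adjoint (L g)) x)) (h g)
      simpa using this
    rw [hf]
    exact h2
  -- (i) for an arbitrary generator
  have part1gen : ∀ (B : H →L[ℂ] H₀) (θB : H →L[ℂ] K),
      (∀ x, HasSum (fun g => L g ((B ∘L π g⁻¹) x)) (θB x)) →
      ∀ g, θB ∘L π g = lam g ∘L θB := by
    intro B θB hθB g
    ext x
    have h1 := hθB (π g x)
    have h1' := ((Equiv.mulLeft g).hasSum_iff).mpr h1
    have h2 := (lam g).hasSum (hθB x)
    have hfun : ((fun q => L q ((B ∘L π q⁻¹) (π g x))) ∘ (Equiv.mulLeft g))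
        = fun q => lam g (L q ((B ∘L π q⁻¹) x)) := by
      funext q
      have e1 : (B ∘L π (g * q)⁻¹) (π g x) = (B ∘L π q⁻¹) x := by
        simp only [comp_apply]
        congr 1
        have : π (g * q)⁻¹ (π g x) = (π (g * q)⁻¹ * π g) x := rfl
        rw [this, ← map_mul]
        have hg : (g * q)⁻¹ * g = q⁻¹ := by group
        rw [hg]
      show L (g * q) ((B ∘L π (g * q)⁻¹) (π g x)) = lam g (L q ((B ∘L π q⁻¹) x))
      rw [e1, ← ContinuousLinearMap.comp_apply (lam g) (L q), hlam]
    rw [hfun] at h1'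
    exact h1'.unique h2
  have part1 : ∀ g, θA ∘L π g = lam g ∘L θA := part1gen A θA hθA
  -- `lam` is a unitary representation with `adjoint (lam g) = lam g⁻¹`
  have lam_mul_inv : ∀ g : G, lam g ∘L lam g⁻¹ = 1 := by
    intro g
    refine extL _ _ fun q => ?_
    rw [ContinuousLinearMap.comp_assoc, hlam, hlam, mul_inv_cancel_left,
      ContinuousLinearMap.one_def, ContinuousLinearMap.id_comp]
  have adj_lam : ∀ g : G, adjoint (lam g) = lam g⁻¹ := by
    intro g
    calc adjoint (lam g) = adjoint (lam g) ∘L (lam g ∘L lam g⁻¹) := by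
          rw [lam_mul_inv, ContinuousLinearMap.one_def, ContinuousLinearMap.comp_id]
      _ = (adjoint (lam g) ∘L lam g) ∘L lam g⁻¹ :=
          (ContinuousLinearMap.comp_assoc _ _ _).symm
      _ = lam g⁻¹ := by
          rw [(hlamU g).1, ContinuousLinearMap.one_def, ContinuousLinearMap.id_comp]
  -- intertwining of adjoints
  have adj_theta_lam : ∀ g, π g ∘L adjoint θA = adjoint θA ∘L lam g := by
    intro g
    have h := congrArg adjoint (part1 g⁻¹)
    rw [adjoint_comp, adjoint_comp, hπ, inv_inv, adj_lam, inv_inv] at h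
    exact h
  -- (ii)
  have part2 : ∀ (B : H →L[ℂ] H₀) (SB : H →L[ℂ] H) (θB : H →L[ℂ] K),
      (∀ x, HasSum (fun g => adjoint (B ∘L π g⁻¹) ((B ∘L π g⁻¹) x)) (SB x)) →
      SB.IsPositive → IsUnit SB →
      (∀ x, HasSum (fun g => L g ((B ∘L π g⁻¹) x)) (θB x)) →
      ∀ g, (adjoint θA ∘L θB) ∘L π g = π g ∘L (adjoint θA ∘L θB) := by
    intro B SB θB hSB hSBpos hSBinv hθB g
    have hB1 := part1gen B θB hθB g
    calc (adjoint θA ∘L θB) ∘L π g = adjoint θA ∘L (θB ∘L π g) :=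
          ContinuousLinearMap.comp_assoc _ _ _
      _ = adjoint θA ∘L (lam g ∘L θB) := by rw [hB1]
      _ = (adjoint θA ∘L lam g) ∘L θB := (ContinuousLinearMap.comp_assoc _ _ _).symm
      _ = (π g ∘L adjoint θA) ∘L θB := by rw [← adj_theta_lam g]
      _ = π g ∘L (adjoint θA ∘L θB) := ContinuousLinearMap.comp_assoc _ _ _
  -- `S_A = θ_A* θ_A`
  have Lg_theta : ∀ g, adjoint (L g) ∘L θA = A ∘L π g⁻¹ := by
    intro g
    ext x
    have h1 := (adjoint (L g)).hasSum (hθA x)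
    have hfun : (fun q => adjoint (L g) (L q ((A ∘L π q⁻¹) x)))
        = fun q => if q = g then (A ∘L π g⁻¹) x else 0 := by
      funext q
      by_cases h : q = g
      · subst h
        rw [if_pos rfl, ← ContinuousLinearMap.comp_apply, hL1]
        rfl
      · rw [if_neg h, ← ContinuousLinearMap.comp_apply, hL0 g q (Ne.symm h)]
        rfl
    rw [hfun] at h1
    have h2 : HasSum (fun q => if q = g then (A ∘L π g⁻¹) x else 0) ((A ∘L π g⁻¹) x) :=
      hasSum_ite_eq g _
    exact h1.unique h2
  have theta_L : ∀ g, adjoint θA ∘L L g = adjoint (A ∘L π g⁻¹) := by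
    intro g
    have h := congrArg adjoint (Lg_theta g)
    rwa [adjoint_comp, adjoint_adjoint] at h
  have hSAeq : SA = adjoint θA ∘L θA := by
    ext x
    have h1 := (adjoint θA).hasSum (hθA x)
    have hfun : (fun g => adjoint θA (L g ((A ∘L π g⁻¹) x)))
        = fun g => adjoint (A ∘L π g⁻¹) ((A ∘L π g⁻¹) x) := by
      funext g
      rw [← ContinuousLinearMap.comp_apply, theta_L]
    rw [hfun] at h1
    exact (hSA x).unique h1
  have part3 : ∀ g, SA ∘L π g = π g ∘L SA := by
    intro g
    rw [hSAeq]
    exact part2 A SA θA hSA hSApos hSAinv hθA g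
  refine ⟨part1, part2, part3, ?_⟩
  -- (iv)
  intro R hRpos h1 h2 x
  have h1' : R * R * SA = 1 := h1
  have h2' : SA * (R * R) = 1 := h2
  have hπmul : ∀ g h : G, π g * π h = π (g * h) := fun g h => (map_mul π g h).symm
  have hπcomm : ∀ g : G, π g * SA = SA * π g := fun g => (part3 g).symm
  have hR2comm : ∀ g : G, π g * (R * R) = R * R * π g := by
    intro g
    have key : SA * (π g * (R * R)) = π g := by
      rw [← mul_assoc, ← hπcomm g, mul_assoc, h2', mul_one]
    calc π g * (R * R) = R * R * SA * (π g * (R * R)) := by rw [h1', one_mul]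
      _ = R * R * (SA * (π g * (R * R))) := by rw [mul_assoc]
      _ = R * R * π g := by rw [key]
  have hR0 : 0 ≤ R := (ContinuousLinearMap.nonneg_iff_isPositive R).2 hRpos
  have hRcomm : ∀ g : G, π g * R = R * π g := by
    intro g
    have hQpos' : (π g * R * π g⁻¹).IsPositive := by
      rw [mul_assoc]
      show (π g ∘L (R ∘L π g⁻¹)).IsPositive
      rw [← hπ g]
      exact hRpos.conj_adjoint (π g)
    have hQ0 : 0 ≤ π g * R * π g⁻¹ :=
      (ContinuousLinearMap.nonneg_iff_isPositive _).2 hQpos'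
    have hmid' : ∀ y : H →L[ℂ] H, π g⁻¹ * (π g * y) = y := by
      intro y
      rw [← mul_assoc, hπmul, inv_mul_cancel, map_one, one_mul]
    have hQsq : (π g * R * π g⁻¹) * (π g * R * π g⁻¹) = R * R := by
      calc (π g * R * π g⁻¹) * (π g * R * π g⁻¹)
          = π g * R * (π g⁻¹ * (π g * (R * π g⁻¹))) := by simp only [mul_assoc]
        _ = π g * R * (R * π g⁻¹) := by rw [hmid']
        _ = π g * (R * R) * π g⁻¹ := by simp only [mul_assoc]
        _ = R * R * π g * π g⁻¹ := by rw [hR2comm]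
        _ = R * R := by rw [mul_assoc, hπmul, mul_inv_cancel, map_one, mul_one]
    have e1 : CFC.sqrt (R * R) = R := CFC.sqrt_unique rfl hR0
    have e2 : CFC.sqrt (R * R) = π g * R * π g⁻¹ := CFC.sqrt_unique hQsq hQ0
    have hQR : π g * R * π g⁻¹ = R := e2.symm.trans e1
    have h3 : (π g * R * π g⁻¹) * π g = π g * R := by
      rw [mul_assoc, hπmul, inv_mul_cancel, map_one, mul_one]
    rw [hQR] at h3
    exact h3.symm
  have hSAR : SA * R = R * SA := by
    calc SA * R = SA * R * (R * R * SA) := by rw [h1', mul_one]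
      _ = SA * (R * R) * (R * SA) := by simp only [mul_assoc]
      _ = R * SA := by rw [h2', one_mul]
  have hRSAR : R * (SA * R) = 1 := by rw [hSAR, ← mul_assoc, h1']
  have hfin : ∀ g : G, (A ∘L R) ∘L π g⁻¹ = (A ∘L π g⁻¹) ∘L R := by
    intro g
    rw [ContinuousLinearMap.comp_assoc, ContinuousLinearMap.comp_assoc]
    congr 1
    exact (hRcomm g⁻¹).symm
  have hRadj : adjoint R = R := by
    have h := hRpos.isSelfAdjoint
    rw [← ContinuousLinearMap.star_eq_adjoint]
    exact h
  have hs := R.hasSum (hSA (R x))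
  have hval : R (SA (R x)) = x := by
    have h3 : (R ∘L (SA ∘L R)) x = (1 : H →L[ℂ] H) x := by
      rw [show R ∘L (SA ∘L R) = 1 from hRSAR]
    simpa using h3
  rw [hval] at hs
  have hfun : ∀ g : G, adjoint ((A ∘L R) ∘L π g⁻¹) (((A ∘L R) ∘L π g⁻¹) x)
      = R (adjoint (A ∘L π g⁻¹) ((A ∘L π g⁻¹) (R x))) := by
    intro g
    rw [hfin g, adjoint_comp, hRadj]
    rfl
  simp only [hfun]
  exact hs
end

section
/- Let G be a discrete group and {A_g}_{g∈G} a Parseval operator-valued frame in B(H,H_o). There exists a unitary representation π of G on H with A_g = A_e π_{g^{-1}} for all g ∈ G if and only if A_{gp} A_{gq}* = A_p A_q* for all p,q,g ∈ G. -/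
open ContinuousLinearMap

section Aux

variable {H H₀ : Type*}
  [NormedAddCommGroup H] [InnerProductSpace ℂ H] [CompleteSpace H]
  [NormedAddCommGroup H₀] [InnerProductSpace ℂ H₀] [CompleteSpace H₀]
  {G : Type*} [Group G]

local notation "⟪" x ", " y "⟫" => @inner ℂ _ _ x y

private lemma hasSum_congr' {ι M : Type*} [AddCommMonoid M] [TopologicalSpace M]
    {f g : ι → M} {a : M} (h : ∀ i, f i = g i) : HasSum f a ↔ HasSum g a := by
  rw [funext h]

/-- Parseval: `Σ ‖A_g v‖² = ‖v‖²`. -/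
private lemma aux_normsq (A : G → (H →L[ℂ] H₀))
    (hPars : ∀ x, HasSum (fun g => adjoint (A g) (A g x)) x) (v : H) :
    HasSum (fun g => ‖A g v‖ ^ 2) (‖v‖ ^ 2) := by
  have h1 : HasSum (fun g => ⟪v, adjoint (A g) (A g v)⟫) ⟪v, v⟫ :=
    (innerSL ℂ v).hasSum (hPars v)
  have h2 := Complex.reCLM.hasSum h1
  have h3 : ∀ g : G, Complex.reCLM ⟪v, adjoint (A g) (A g v)⟫ = ‖A g v‖ ^ 2 := by
    intro g
    rw [ContinuousLinearMap.adjoint_inner_right]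
    simpa using inner_self_eq_norm_sq (𝕜 := ℂ) (A g v)
  have h4 : Complex.reCLM ⟪v, v⟫ = ‖v‖ ^ 2 := by
    simpa using inner_self_eq_norm_sq (𝕜 := ℂ) v
  rw [h4] at h2
  exact (hasSum_congr' h3).mp h2

/-- The key bound: for any finite set,
`‖Σ_{h∈F} A_h* y_h‖² ≤ Σ_{h∈F} ‖y_h‖²`. -/
private lemma aux_bound (A : G → (H →L[ℂ] H₀))
    (hPars : ∀ x, HasSum (fun g => adjoint (A g) (A g x)) x)
    (y : G → H₀) (F : Finset G) :
    ‖∑ h ∈ F, adjoint (A h) (y h)‖ ^ 2 ≤ ∑ h ∈ F, ‖y h‖ ^ 2 := by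
  classical
  set v := ∑ h ∈ F, adjoint (A h) (y h) with hv
  have hAv : ∑ h ∈ F, ‖A h v‖ ^ 2 ≤ ‖v‖ ^ 2 :=
    sum_le_hasSum F (fun _ _ => sq_nonneg _) (aux_normsq A hPars v)
  have hsum : ‖v‖ ^ 2 ≤ ∑ h ∈ F, ‖y h‖ * ‖A h v‖ := by
    have e1 : (‖v‖ : ℝ) ^ 2 = RCLike.re ⟪v, v⟫ := (inner_self_eq_norm_sq (𝕜 := ℂ) v).symm
    rw [e1, hv, sum_inner]
    rw [map_sum]
    refine Finset.sum_le_sum fun h _ => ?_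
    rw [ContinuousLinearMap.adjoint_inner_left]
    exact re_inner_le_norm (𝕜 := ℂ) _ _
  have hcs : (∑ h ∈ F, ‖y h‖ * ‖A h v‖) ^ 2 ≤
      (∑ h ∈ F, ‖y h‖ ^ 2) * ∑ h ∈ F, ‖A h v‖ ^ 2 :=
    Finset.sum_mul_sq_le_sq_mul_sq F _ _
  have hS0 : (0 : ℝ) ≤ ∑ h ∈ F, ‖y h‖ ^ 2 :=
    Finset.sum_nonneg fun _ _ => sq_nonneg _
  nlinarith [sq_nonneg (‖v‖), norm_nonneg v,
    Finset.sum_nonneg (fun h (_ : h ∈ F) => mul_nonneg (norm_nonneg (y h)) (norm_nonneg (A h v)))]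

/-- Summability of `Σ A_h* y_h` for square-summable `y`. -/
private lemma aux_summable (A : G → (H →L[ℂ] H₀))
    (hPars : ∀ x, HasSum (fun g => adjoint (A g) (A g x)) x)
    {y : G → H₀} (hy : Summable fun h => ‖y h‖ ^ 2) :
    Summable fun h => adjoint (A h) (y h) := by
  rw [summable_iff_vanishing_norm]
  intro ε hε
  obtain ⟨s, hs⟩ := summable_iff_vanishing_norm.1 hy (ε ^ 2) (by positivity)
  refine ⟨s, fun t ht => ?_⟩
  have h2 := hs t ht
  have h3 : ∑ h ∈ t, ‖y h‖ ^ 2 < ε ^ 2 := by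
    calc ∑ h ∈ t, ‖y h‖ ^ 2 ≤ ‖∑ h ∈ t, ‖y h‖ ^ 2‖ := le_abs_self _
    _ < ε ^ 2 := h2
  have h1 := aux_bound A hPars y t
  have h4 : ‖∑ h ∈ t, adjoint (A h) (y h)‖ ^ 2 < ε ^ 2 := lt_of_le_of_lt h1 h3
  exact lt_of_pow_lt_pow_left₀ 2 (le_of_lt hε) h4

end Aux

set_option maxHeartbeats 1600000 in
/-- Let `G` be a discrete group and `{A_g}_{g∈G}` a Parseval
operator-valued frame in `B(H,H₀)` (i.e. `Σ_g A_g* A_g = I` strongly). There is a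
unitary representation `π` of `G` on `H` with `A_g = A 1 π_{g⁻¹}` for all `g ∈ G` if
and only if `A_{gp} A_{gq}* = A_p A_q*` for all `p, q, g ∈ G`. -/
theorem stmt18
    {H H₀ : Type*}
    [NormedAddCommGroup H] [InnerProductSpace ℂ H] [CompleteSpace H]
    [NormedAddCommGroup H₀] [InnerProductSpace ℂ H₀] [CompleteSpace H₀]
    {G : Type*} [Group G]
    (A : G → (H →L[ℂ] H₀))
    (hPars : ∀ x, HasSum (fun g => adjoint (A g) (A g x)) x) :
    (∃ π : G →* (H →L[ℂ] H),
        (∀ g, adjoint (π g) = π g⁻¹) ∧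
        ∀ g, A g = A 1 ∘L π g⁻¹) ↔
      (∀ p q g : G, A (g * p) ∘L adjoint (A (g * q)) = A p ∘L adjoint (A q)) := by
  constructor
  · rintro ⟨π, hadj, hA⟩ p q g
    have key : ∀ a b : G, A a ∘L adjoint (A b) = A 1 ∘L (π (a⁻¹ * b) ∘L adjoint (A 1)) := by
      intro a b
      rw [hA a, hA b, adjoint_comp, hadj, inv_inv]
      rw [comp_assoc, ← comp_assoc (π a⁻¹) (π b) (adjoint (A 1))]
      congr 2
      rw [← ContinuousLinearMap.mul_def, ← map_mul]
    rw [key, key p q]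
    congr 2
    simp [mul_inv_rev, mul_assoc]
  · intro hcond
    -- square-norm sums with shifted index
    have hsq : ∀ (g : G) (x : H), HasSum (fun h => ‖A (g * h) x‖ ^ 2) (‖x‖ ^ 2) := by
      intro g x
      have := ((Equiv.mulLeft g).hasSum_iff
        (f := fun h => ‖A h x‖ ^ 2) (a := ‖x‖ ^ 2)).2 (aux_normsq A hPars x)
      exact (hasSum_congr' (fun h => rfl)).mp this
    have hS : ∀ (g : G) (x : H), Summable fun h => adjoint (A h) (A (g * h) x) := by
      intro g x
      exact aux_summable A hPars (hsq g x).summable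
    -- the candidate representation
    let T : G → (H →L[ℂ] H) := fun g =>
      LinearMap.mkContinuous
        { toFun := fun x => ∑' h, adjoint (A h) (A (g⁻¹ * h) x)
          map_add' := by
            intro x y
            simp only [map_add]
            exact Summable.tsum_add (hS g⁻¹ x) (hS g⁻¹ y)
          map_smul' := by
            intro c x
            simp only [map_smul, RingHom.id_apply]
            exact ((hS g⁻¹ x).hasSum.const_smul c).tsum_eq }
        1
        (by
          intro x
          rw [one_mul]
          have hh := (hS g⁻¹ x).hasSum
          have hb : ∀ F : Finset G, ‖∑ h ∈ F, adjoint (A h) (A (g⁻¹ * h) x)‖ ≤ ‖x‖ := by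
            intro F
            have h1 := aux_bound A hPars (fun h => A (g⁻¹ * h) x) F
            have h2 : ∑ h ∈ F, ‖A (g⁻¹ * h) x‖ ^ 2 ≤ ‖x‖ ^ 2 :=
              sum_le_hasSum F (fun _ _ => sq_nonneg _) (hsq g⁻¹ x)
            nlinarith [norm_nonneg (∑ h ∈ F, adjoint (A h) (A (g⁻¹ * h) x)), norm_nonneg x]
          exact le_of_tendsto' (hh.norm) hb |>.trans_eq rfl)
    have hT : ∀ (g : G) (x : H),
        HasSum (fun h => adjoint (A h) (A (g⁻¹ * h) x)) (T g x) := by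
      intro g x
      exact (hS g⁻¹ x).hasSum
    -- multiplicativity
    have hmul : ∀ (g g' : G) (x : H), T g (T g' x) = T (g * g') x := by
      intro g g' x
      have key : ∀ h : G, A (g⁻¹ * h) (T g' x) = A h (T (g * g') x) := by
        intro h
        have h2 : HasSum (fun k => A (g⁻¹ * h) (adjoint (A k) (A (g'⁻¹ * k) x)))
            (A (g⁻¹ * h) (T g' x)) := (A (g⁻¹ * h)).hasSum (hT g' x)
        have h3 : ∀ k : G, A (g⁻¹ * h) (adjoint (A k) (A (g'⁻¹ * k) x))
            = A h (adjoint (A (g * k)) (A (g'⁻¹ * k) x)) := by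
          intro k
          have := hcond h (g * k) g⁻¹
          rw [inv_mul_cancel_left] at this
          have h' := ContinuousLinearMap.ext_iff.mp this (A (g'⁻¹ * k) x)
          simpa using h'
        have h4 : HasSum (fun k => A h (adjoint (A (g * k)) (A (g'⁻¹ * k) x)))
            (A (g⁻¹ * h) (T g' x)) := (hasSum_congr' h3).mp h2
        have h5 : HasSum (fun k => A h (adjoint (A k) (A ((g * g')⁻¹ * k) x)))
            (A h (T (g * g') x)) := (A h).hasSum (hT (g * g') x)
        have h6 : HasSum (fun k => A h (adjoint (A k) (A ((g * g')⁻¹ * k) x)))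
            (A (g⁻¹ * h) (T g' x)) := by
          refine ((Equiv.mulLeft g).hasSum_iff
            (f := fun k => A h (adjoint (A k) (A ((g * g')⁻¹ * k) x)))
            (a := A (g⁻¹ * h) (T g' x))).1 ?_
          refine (hasSum_congr' ?_).mp h4
          intro k
          simp [Equiv.coe_mulLeft, mul_inv_rev, mul_assoc]
        exact h6.unique h5
      have h7 : HasSum (fun h => adjoint (A h) (A h (T (g * g') x))) (T g (T g' x)) := by
        refine (hasSum_congr' ?_).mp (hT g (T g' x))
        intro h
        rw [key h]
      exact h7.unique (hPars (T (g * g') x))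
    have hone : T 1 = 1 := by
      ext x
      have h1 : HasSum (fun h => adjoint (A h) (A h x)) (T 1 x) := by
        refine (hasSum_congr' ?_).mp (hT 1 x)
        intro h
        simp
      exact h1.unique (hPars x)
    let π : G →* (H →L[ℂ] H) :=
      { toFun := T
        map_one' := hone
        map_mul' := by
          intro g g'
          ext x
          rw [ContinuousLinearMap.mul_apply]
          exact (hmul g g' x).symm }
    refine ⟨π, ?_, ?_⟩
    · -- adjoint (π g) = π g⁻¹
      intro g
      symm
      rw [ContinuousLinearMap.eq_adjoint_iff]
      intro x y
      -- LHS : ⟪T g⁻¹ x, y⟫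
      have hT' : HasSum (fun h => adjoint (A h) (A (g * h) x)) (T g⁻¹ x) := by
        have := hT g⁻¹ x
        rwa [inv_inv] at this
      have h1 : HasSum (fun h => (inner (𝕜 := ℂ) y (adjoint (A h) (A (g * h) x))))
          (inner (𝕜 := ℂ) y (T g⁻¹ x)) := (innerSL ℂ y).hasSum hT'
      have h2 : HasSum
          (fun h => (inner (𝕜 := ℂ) (A (g * h) x) (A h y)))
          (inner (𝕜 := ℂ) (T g⁻¹ x) y) := by
        have hc := Complex.conjCLE.toContinuousLinearMap.hasSum h1
        have e1 : ∀ h : G, Complex.conjCLE.toContinuousLinearMap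
            (inner (𝕜 := ℂ) y (adjoint (A h) (A (g * h) x)))
            = inner (𝕜 := ℂ) (A (g * h) x) (A h y) := by
          intro h
          rw [ContinuousLinearEquiv.coe_coe, Complex.conjCLE_apply, inner_conj_symm,
            ContinuousLinearMap.adjoint_inner_left]
        have e2 : Complex.conjCLE.toContinuousLinearMap (inner (𝕜 := ℂ) y (T g⁻¹ x))
            = inner (𝕜 := ℂ) (T g⁻¹ x) y := by
          rw [ContinuousLinearEquiv.coe_coe, Complex.conjCLE_apply, inner_conj_symm]
        rw [← e2]
        exact (hasSum_congr' e1).mp hc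
      have h3 : HasSum (fun h => (inner (𝕜 := ℂ) x (adjoint (A h) (A (g⁻¹ * h) y))))
          (inner (𝕜 := ℂ) x (T g y)) := (innerSL ℂ x).hasSum (hT g y)
      have h4 : HasSum (fun h => (inner (𝕜 := ℂ) (A (g * h) x) (A h y)))
          (inner (𝕜 := ℂ) x (T g y)) := by
        have h5 : HasSum (fun h => (inner (𝕜 := ℂ) (A h x) (A (g⁻¹ * h) y)))
            (inner (𝕜 := ℂ) x (T g y)) := by
          refine (hasSum_congr' ?_).mp h3
          intro h
          rw [ContinuousLinearMap.adjoint_inner_right]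
        have h6 := ((Equiv.mulLeft g).hasSum_iff
          (f := fun h => (inner (𝕜 := ℂ) (A h x) (A (g⁻¹ * h) y)))
          (a := inner (𝕜 := ℂ) x (T g y))).2 h5
        refine (hasSum_congr' ?_).mp h6
        intro h
        simp [Equiv.coe_mulLeft]
      exact h2.unique h4
    · -- A g = A 1 ∘L π g⁻¹
      intro g
      ext x
      show A g x = A 1 (T g⁻¹ x)
      have hT' : HasSum (fun h => adjoint (A h) (A (g * h) x)) (T g⁻¹ x) := by
        have := hT g⁻¹ x
        rwa [inv_inv] at this
      have h1 : HasSum (fun h => A 1 (adjoint (A h) (A (g * h) x)))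
          (A 1 (T g⁻¹ x)) := (A 1).hasSum hT'
      have h2 : ∀ h : G, A 1 (adjoint (A h) (A (g * h) x))
          = A g (adjoint (A (g * h)) (A (g * h) x)) := by
        intro h
        have := hcond 1 h g
        rw [mul_one] at this
        have h' := ContinuousLinearMap.ext_iff.mp this (A (g * h) x)
        simpa using h'.symm
      have h3 : HasSum (fun h => A g (adjoint (A (g * h)) (A (g * h) x)))
          (A 1 (T g⁻¹ x)) := (hasSum_congr' h2).mp h1
      have h4 : HasSum (fun h => adjoint (A (g * h)) (A (g * h) x)) x := by
        have := ((Equiv.mulLeft g).hasSum_iff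
          (f := fun k => adjoint (A k) (A k x)) (a := x)).2 (hPars x)
        exact (hasSum_congr' (fun h => rfl)).mp this
      have h5 := (A g).hasSum h4
      exact (h3.unique h5).symm
end
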